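/- arXiv:1512.09001 — 7 statements merged into one kernel-verified Lean document; each statement's English description precedes it below -/
import Mathlib

section
/- Let ψ : [0,∞) → ℝ be twice differentiable with ψ'' increasing to +∞. Then for every A > 0 and every y₀ > 0 there exists y ≥ y₀ such that |ψ''(x)/ψ''(y) − 1| ≤ 1/A whenever |x − y| ≤ A·(ψ''(y))^{−1/2}. -/
open Real Filter

/-- One-sided key claim: if `f` is monotone on `[0,∞)` and tends to `+∞`, then
for any threshold `y₁ > 0` with `f y₁ ≥ 1` there is `y ≥ y₁` where `f` grows by
a factor at most `c = 1 + 1/A` over the interval `[y, y + 2A (f y)^{-1/2}]`. -/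
lemma stmt_0_aux (f : ℝ → ℝ) (hmono : MonotoneOn f (Set.Ici 0))
    (hinf : Tendsto f atTop atTop) (A : ℝ) (hA : 0 < A)
    (y₁ : ℝ) (hy₁pos : 0 < y₁) (hy₁ : 1 ≤ f y₁) :
    ∃ y ≥ y₁, f (y + 2 * A * (f y) ^ (-(1:ℝ)/2)) ≤ (1 + 1/A) * f y := by
  by_contra h
  push_neg at h
  set c : ℝ := 1 + 1/A with hc
  have hc1 : 1 < c := by rw [hc]; have := one_div_pos.mpr hA; linarith
  have hc0 : 0 < c := by linarith
  set M : ℝ := f y₁ with hM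
  have hM1 : 1 ≤ M := hy₁
  have hM0 : 0 < M := by linarith
  -- the recursively defined sequence of points
  set u : ℕ → ℝ := fun n => Nat.rec y₁ (fun _ p => p + 2 * A * (f p) ^ (-(1:ℝ)/2)) n with hu
  have hu0 : u 0 = y₁ := rfl
  have huS : ∀ n, u (n+1) = u n + 2 * A * (f (u n)) ^ (-(1:ℝ)/2) := fun n => rfl
  -- invariant: points stay ≥ y₁ and f grows geometrically
  have key : ∀ n, y₁ ≤ u n ∧ c ^ n * M ≤ f (u n) := by
    intro n
    induction n with
    | zero => exact ⟨le_refl _, by rw [hu0]; norm_num; exact hM.le⟩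
    | succ n ih =>
      obtain ⟨h1, h2⟩ := ih
      have hfun : 0 < f (u n) := lt_of_lt_of_le (by positivity) h2
      have hstep : 0 < 2 * A * (f (u n)) ^ (-(1:ℝ)/2) := by
        have := Real.rpow_pos_of_pos hfun (-(1:ℝ)/2); positivity
      constructor
      · rw [huS]; linarith
      · have hlt : c * f (u n) < f (u n + 2 * A * (f (u n)) ^ (-(1:ℝ)/2)) := h (u n) h1
        rw [huS]
        calc c ^ (n+1) * M = c * (c ^ n * M) := by ring
        _ ≤ c * f (u n) := by nlinarith
        _ ≤ f (u n + 2 * A * (f (u n)) ^ (-(1:ℝ)/2)) := hlt.le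
  -- geometric bound on the step sizes
  set r : ℝ := c ^ (-(1:ℝ)/2) with hr
  have hr0 : 0 < r := Real.rpow_pos_of_pos hc0 _
  have hr1 : r < 1 := by
    rw [hr]
    have := Real.rpow_lt_one_of_one_lt_of_neg hc1 (show (-(1:ℝ)/2) < 0 by norm_num)
    exact this
  set D : ℝ := 2 * A * M ^ (-(1:ℝ)/2) with hD
  have hD0 : 0 < D := by
    have := Real.rpow_pos_of_pos hM0 (-(1:ℝ)/2); positivity
  set Y : ℝ := y₁ + D / (1 - r) with hY
  have bnd : ∀ n, u n ≤ Y - D * r ^ n / (1 - r) := by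
    intro n
    induction n with
    | zero => rw [hu0, hY]; simp
    | succ n ih =>
      have h2 := (key n).2
      have hfun : 0 < f (u n) := lt_of_lt_of_le (by positivity) h2
      have hstep : 2 * A * (f (u n)) ^ (-(1:ℝ)/2) ≤ D * r ^ n := by
        have hcnM : (0:ℝ) < c ^ n * M := by positivity
        have h1 : (f (u n)) ^ (-(1:ℝ)/2) ≤ (c ^ n * M) ^ (-(1:ℝ)/2) :=
          Real.rpow_le_rpow_of_nonpos hcnM h2 (by norm_num)
        have h2' : (c ^ n * M : ℝ) ^ (-(1:ℝ)/2) = r ^ n * M ^ (-(1:ℝ)/2) := by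
          rw [Real.mul_rpow (by positivity) hM0.le, hr,
            ← Real.rpow_natCast c n, ← Real.rpow_mul hc0.le, mul_comm ((n:ℝ)),
            Real.rpow_mul hc0.le, Real.rpow_natCast]
        rw [hD]
        calc 2 * A * (f (u n)) ^ (-(1:ℝ)/2) ≤ 2 * A * (r ^ n * M ^ (-(1:ℝ)/2)) := by
              rw [← h2']; nlinarith
        _ = 2 * A * M ^ (-(1:ℝ)/2) * r ^ n := by ring
      rw [huS]
      have h1r : 0 < 1 - r := by linarith
      have : D * r ^ (n+1) / (1 - r) = D * r ^ n / (1-r) - D * r ^ n := by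
        field_simp; ring
      rw [this]
      linarith
  -- contradiction: f (u n) is bounded by f Y but grows geometrically
  have hYub : ∀ n, u n ≤ Y := by
    intro n
    have h1r : 0 < 1 - r := by linarith
    have h0 : 0 ≤ D * r ^ n / (1 - r) := by positivity
    exact le_trans (bnd n) (sub_le_self Y h0)
  have hfb : ∀ n, f (u n) ≤ f Y := by
    intro n
    have h0 : (0:ℝ) ≤ u n := le_trans hy₁pos.le (key n).1
    exact hmono h0 (le_trans h0 (hYub n)) (hYub n)
  obtain ⟨n, hn⟩ := pow_unbounded_of_one_lt (f Y) hc1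
  have := (key n).2
  have hcn : 0 < c ^ n := by positivity
  nlinarith [hfb n]

/-- If ψ'' increases to +∞, then ψ'' is almost constant on intervals of
length ≍ (ψ''(y))^{-1/2} around suitably chosen points y. -/
theorem stmt_0 (ψ : ℝ → ℝ)
    (hC2 : ContDiffOn ℝ 2 ψ (Set.Ici 0))
    (hmono : MonotoneOn (iteratedDeriv 2 ψ) (Set.Ici 0))
    (hinf : Tendsto (iteratedDeriv 2 ψ) atTop atTop) :
    ∀ A > (0:ℝ), ∀ y₀ > (0:ℝ), ∃ y ≥ y₀,
      ∀ x ≥ (0:ℝ), |x - y| ≤ A * (iteratedDeriv 2 ψ y) ^ (-(1:ℝ)/2) →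
        |iteratedDeriv 2 ψ x / iteratedDeriv 2 ψ y - 1| ≤ 1 / A := by
  intro A hA y₀ hy₀
  set f := iteratedDeriv 2 ψ with hf
  obtain ⟨y₁, hy₁f, hy₁ge⟩ :=
    ((hinf.eventually_ge_atTop 1).and (eventually_ge_atTop y₀)).exists
  have hy₁pos : 0 < y₁ := lt_of_lt_of_le hy₀ hy₁ge
  obtain ⟨y, hyy₁, hle⟩ := stmt_0_aux f hmono hinf A hA y₁ hy₁pos hy₁f
  have hy0 : (0:ℝ) ≤ y := le_trans hy₁pos.le hyy₁
  have hfy : 1 ≤ f y := le_trans hy₁f (hmono hy₁pos.le hy0 hyy₁)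
  have hfy0 : 0 < f y := by linarith
  set δ : ℝ := A * (f y) ^ (-(1:ℝ)/2) with hδ
  have hδ0 : 0 < δ := by
    have := Real.rpow_pos_of_pos hfy0 (-(1:ℝ)/2); positivity
  refine ⟨y + δ, by linarith [le_trans hy₁ge hyy₁], ?_⟩
  intro x hx0 hxd
  have hyδ0 : (0:ℝ) ≤ y + δ := by linarith
  have hfyδ : f y ≤ f (y + δ) := hmono hy0 hyδ0 (by linarith)
  have hfyδ0 : 0 < f (y + δ) := lt_of_lt_of_le hfy0 hfyδ
  have hδ' : A * (f (y + δ)) ^ (-(1:ℝ)/2) ≤ δ := by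
    have h := Real.rpow_le_rpow_of_nonpos hfy0 hfyδ (show (-(1:ℝ)/2) ≤ 0 by norm_num)
    calc A * (f (y + δ)) ^ (-(1:ℝ)/2) ≤ A * (f y) ^ (-(1:ℝ)/2) := by nlinarith
    _ = δ := hδ.symm
  have hxmem : y ≤ x ∧ x ≤ y + 2 * δ := by
    rw [abs_le] at hxd
    constructor <;> nlinarith [hxd.1, hxd.2]
  have hfx1 : f y ≤ f x := hmono hy0 hx0 hxmem.1
  have h2δ : y + 2 * δ = y + 2 * A * (f y) ^ (-(1:ℝ)/2) := by rw [hδ]; ring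
  have hfx2 : f x ≤ (1 + 1/A) * f y := by
    have := hmono hx0 (by linarith : (0:ℝ) ≤ y + 2 * δ) hxmem.2
    rw [h2δ] at this
    linarith
  have hfyδ2 : f (y + δ) ≤ (1 + 1/A) * f y := by
    have := hmono hyδ0 (by linarith : (0:ℝ) ≤ y + 2 * δ) (by linarith)
    rw [h2δ] at this
    linarith
  rw [abs_le]
  have hAinv : 0 < 1/A := by positivity
  constructor
  · -- lower bound : f x / f (y+δ) ≥ 1/(1+1/A) ≥ 1 - 1/A
    have h1 : 1 - 1/A ≤ f x / f (y + δ) := by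
      rw [le_div_iff₀ hfyδ0]
      nlinarith [mul_nonneg hAinv.le (sub_nonneg.mpr hfyδ2), sq_nonneg (1/A),
        mul_pos hAinv hfy0, mul_nonneg hAinv.le hfyδ0.le]
    linarith
  · rw [sub_le_iff_le_add, div_le_iff₀ hfyδ0]
    nlinarith [mul_nonneg hAinv.le (sub_nonneg.mpr hfyδ)]
end

section
/- For every positive integer k and every real t ≥ 1, if z is a complex number with |z| = 1 − t/k, then |log|1 − z^k|| ≤ C·e^{−t} for an absolute constant C. -/
open Real

/-- For |z| = 1 - t/k with 1 ≤ t ≤ k, |log|1 - z^k|| ≤ C e^{-t}. -/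
theorem stmt_1 : ∃ C > (0:ℝ), ∀ (k : ℕ), 0 < k → ∀ t : ℝ, 1 ≤ t → t ≤ k →
    ∀ z : ℂ, ‖z‖ = 1 - t / k →
      |Real.log (‖1 - z ^ k‖)| ≤ C * Real.exp (-t) := by
  refine ⟨2, by norm_num, fun k hk t ht1 htk z hz => ?_⟩
  have hk0 : (0:ℝ) < k := Nat.cast_pos.mpr hk
  have hnn : (0:ℝ) ≤ 1 - t / k := by
    rw [sub_nonneg, div_le_one hk0]; exact htk
  set x := Real.exp (-t) with hx
  have hx0 : 0 < x := Real.exp_pos _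
  have hbound : (1 - t / k) ^ k ≤ x := by
    calc (1 - t / k) ^ k ≤ Real.exp (-(t / k)) ^ k :=
          pow_le_pow_left₀ hnn (by linarith [Real.add_one_le_exp (-(t/k))]) k
      _ = x := by
          rw [← Real.exp_nat_mul, hx]
          congr 1
          field_simp
  have habs : ‖z ^ k‖ ≤ x := by
    rw [norm_pow, hz]; exact hbound
  have hxhalf : x ≤ 1/2 := by
    have h1 : x ≤ Real.exp (-1) := Real.exp_le_exp.mpr (by linarith)
    have h2 : Real.exp (-1) ≤ 1/2 := by
      rw [Real.exp_neg, inv_le_comm₀ (Real.exp_pos 1) (by norm_num)]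
      have := Real.add_one_le_exp (1:ℝ)
      linarith
    linarith
  set m := ‖1 - z ^ k‖ with hm
  have hupper : m ≤ 1 + x := by
    have := norm_sub_le (1 : ℂ) (z ^ k)
    simp only [norm_one] at this
    linarith [habs, this]
  have hlower : 1 - x ≤ m := by
    have := norm_sub_norm_le (1 : ℂ) (z ^ k)
    simp only [norm_one] at this
    linarith [habs, this]
  have hm0 : 0 < m := by linarith
  rw [abs_le]
  constructor
  · -- lower bound: log m ≥ log (1-x) ≥ -2x
    have h1x : (0:ℝ) < 1 - x := by linarith
    have hlog1 : Real.log (1 - x) ≤ Real.log m := Real.log_le_log h1x hlower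
    have hinv : Real.log (1 - x)⁻¹ ≤ (1 - x)⁻¹ - 1 :=
      Real.log_le_sub_one_of_pos (by positivity)
    have hfrac : (1 - x)⁻¹ - 1 ≤ 2 * x := by
      have hmul : (1 - x) * (1 - x)⁻¹ = 1 := mul_inv_cancel₀ (ne_of_gt h1x)
      nlinarith [inv_pos.mpr h1x]
    rw [Real.log_inv] at hinv
    linarith
  · -- upper bound: log m ≤ m - 1 ≤ x ≤ 2x
    have := Real.log_le_sub_one_of_pos hm0
    linarith
end

section
/- For every positive integer k and every real t with 1 ≤ t, if z is a complex number with |z| = 1 + t/k, then |log|1 − z^k| − k·log|z|| ≤ C·e^{−c·min(t,k)} for absolute constants C, c > 0. -/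
open Real

/-- For |z| = 1 + t/k with t ≥ 1, |log|1 - z^k| - k log|z|| ≤ C e^{-c min(t,k)}. -/
theorem stmt_2 : ∃ C > (0:ℝ), ∃ c > (0:ℝ), ∀ (k : ℕ), 0 < k → ∀ t : ℝ, 1 ≤ t →
    ∀ z : ℂ, ‖z‖ = 1 + t / k →
      |Real.log ‖1 - z ^ k‖ - k * Real.log ‖z‖|
        ≤ C * Real.exp (-c * min t k) := by
  refine ⟨2, by norm_num, Real.log 2, Real.log_pos (by norm_num), ?_⟩
  intro k hk t ht z hz
  have hkpos : (0:ℝ) < k := by exact_mod_cast hk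
  set m : ℝ := min t (k:ℝ) with hm
  have hm1 : (1:ℝ) ≤ m := le_min ht (by exact_mod_cast hk)
  set R : ℝ := ‖z‖ ^ k with hR
  have htk0 : 0 ≤ t / k := div_nonneg (by linarith) hkpos.le
  -- R ≥ 2^m
  have hR2 : (2:ℝ) ^ m ≤ R := by
    rcases le_total t (k:ℝ) with h | h
    · have hmt : m = t := min_eq_left h
      have htk1 : t / k ≤ 1 := (div_le_one hkpos).2 h
      have h1 : (2:ℝ) ^ (t/k) ≤ 1 + t/k := by
        have := rpow_one_add_le_one_add_mul_self (s := 1) (by norm_num)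
          (p := t/k) htk0 htk1
        norm_num at this; exact this
      calc (2:ℝ) ^ m = ((2:ℝ) ^ (t/k)) ^ (k:ℝ) := by
            rw [← Real.rpow_mul (by norm_num : (0:ℝ) ≤ 2),
              div_mul_cancel₀ _ hkpos.ne', hmt]
        _ ≤ (1 + t/k) ^ (k:ℝ) := by
            apply Real.rpow_le_rpow (Real.rpow_nonneg (by norm_num) _) h1
              (Nat.cast_nonneg k)
        _ = R := by rw [hR, hz, Real.rpow_natCast]
    · have hmk : m = (k:ℝ) := min_eq_right h
      have h2 : (2:ℝ) ≤ 1 + t/k := by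
        have : (1:ℝ) ≤ t/k := (one_le_div hkpos).2 h
        linarith
      calc (2:ℝ) ^ m = (2:ℝ) ^ (k:ℕ) := by rw [hmk, Real.rpow_natCast]
        _ ≤ (1 + t/k) ^ k := pow_le_pow_left₀ (by norm_num) h2 k
        _ = R := by rw [hR, hz]
  have h2m : (2:ℝ) ≤ (2:ℝ) ^ m := by
    calc (2:ℝ) = (2:ℝ) ^ (1:ℝ) := (Real.rpow_one 2).symm
      _ ≤ (2:ℝ) ^ m := Real.rpow_le_rpow_left_iff (by norm_num) |>.2 hm1
  have hR2' : (2:ℝ) ≤ R := le_trans h2m hR2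
  have hRpos : (0:ℝ) < R := by linarith
  set A : ℝ := ‖1 - z ^ k‖ with hA
  have hAlow : R - 1 ≤ A := by
    have h := abs_norm_sub_norm_le (z ^ k) 1
    rw [norm_one, norm_pow, ← hR] at h
    calc R - 1 ≤ |R - 1| := le_abs_self _
      _ ≤ ‖z ^ k - 1‖ := h
      _ = A := by rw [hA, ← norm_neg, neg_sub]
  have hAup : A ≤ R + 1 := by
    calc A ≤ ‖(1:ℂ)‖ + ‖z ^ k‖ := by
          rw [hA, sub_eq_add_neg]
          exact (norm_add_le _ _).trans (by rw [norm_neg])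
      _ = R + 1 := by rw [norm_one, norm_pow, hR]; ring
  have hApos : (0:ℝ) < A := by linarith
  have hklog : (k:ℝ) * Real.log ‖z‖ = Real.log R := by
    rw [hR, Real.log_pow]
  -- |log A - log R| ≤ 2 / R
  have hmain : |Real.log A - Real.log R| ≤ 2 / R := by
    rw [abs_le]
    constructor
    · -- log R - log A ≤ 2/R, i.e. log (R/A) ≤ 2/R
      have h1 : Real.log R - Real.log A ≤ Real.log R - Real.log (R - 1) := by
        have := Real.log_le_log (by linarith) hAlow
        linarith
      have h2 : Real.log R - Real.log (R - 1) = Real.log (R / (R - 1)) := by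
        rw [Real.log_div hRpos.ne' (by linarith)]
      have h3 : Real.log (R / (R - 1)) ≤ R / (R - 1) - 1 :=
        Real.log_le_sub_one_of_pos (div_pos hRpos (by linarith))
      have hR1ne : R - 1 ≠ 0 := by linarith
      have h4 : R / (R - 1) - 1 = 1 / (R - 1) := by
        field_simp; ring
      have h5 : 1 / (R - 1) ≤ 2 / R := by
        rw [div_le_div_iff₀ (by linarith) hRpos]
        linarith
      linarith
    · have h1 : Real.log A - Real.log R ≤ Real.log (R + 1) - Real.log R := by
        have := Real.log_le_log hApos hAup
        linarith
      have h2 : Real.log (R + 1) - Real.log R = Real.log ((R + 1) / R) := by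
        rw [Real.log_div (by linarith) hRpos.ne']
      have h3 : Real.log ((R + 1) / R) ≤ (R + 1) / R - 1 :=
        Real.log_le_sub_one_of_pos (div_pos (by linarith) hRpos)
      have h4 : (R + 1) / R - 1 = 1 / R := by field_simp; ring
      have h5 : (1:ℝ) / R ≤ 2 / R := by
        rw [div_le_div_iff₀ hRpos hRpos]; nlinarith
      linarith
  have hfinal : 2 / R ≤ 2 * Real.exp (-Real.log 2 * m) := by
    have hexp : Real.exp (-Real.log 2 * m) = ((2:ℝ) ^ m)⁻¹ := by
      rw [neg_mul, Real.exp_neg, Real.rpow_def_of_pos (by norm_num : (0:ℝ) < 2)]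
    rw [hexp, div_le_iff₀ hRpos, mul_assoc, mul_comm (((2:ℝ)^m)⁻¹) R,
      ← mul_assoc]
    have : (2:ℝ) * ((2:ℝ)^m)⁻¹ * ((2:ℝ)^m) = 2 := by
      field_simp
    nlinarith [Real.rpow_pos_of_pos (show (0:ℝ) < 2 by norm_num) m,
      mul_le_mul_of_nonneg_left hR2 (show (0:ℝ) ≤ 2 * ((2:ℝ)^m)⁻¹ by positivity)]
  calc |Real.log ‖1 - z ^ k‖ - k * Real.log ‖z‖|
      = |Real.log A - Real.log R| := by rw [hklog]
    _ ≤ 2 / R := hmain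
    _ ≤ 2 * Real.exp (-Real.log 2 * m) := hfinal
end

section
/- Let {R_n} satisfy R₁ ≥ 2, R_{n+1} ≥ R_n², and define E(z) = ∏_{n≥1}(1 − (z/R_n)ⁿ). Define h(z) via ψ(t) = t + 2Σ_{s≤n} s(t − log R_s) + n·min(t − log R_n, log R_{n+1} − t) for log R_n ≤ t ≤ log R_{n+1}, and h(z) = ψ(log|z|). Then |E'(λ)| ≍ e^{h(R_n)/2}·n·R_n^{−3/2} for every zero λ of E with |λ| = R_n, with implied constants independent of n and λ. -/
open Real Filter Finset

lemma aux_exp_le (x : ℝ) (hx0 : 0 ≤ x) (hx : x ≤ 1/2) : Real.exp (-(2*x)) ≤ 1 - x := by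
  have h1 : 2*x + 1 ≤ Real.exp (2*x) := Real.add_one_le_exp _
  have h2 : Real.exp (-(2*x)) = 1 / Real.exp (2*x) := by
    rw [Real.exp_neg]; ring
  rw [h2]
  rw [div_le_iff₀ (Real.exp_pos _)]
  nlinarith [Real.exp_pos (2*x)]

lemma aux_geom (N : ℕ) : ∑ m ∈ Icc 1 N, ((1:ℝ)/2)^m = 1 - (1/2)^N := by
  induction N with
  | zero => simp
  | succ N ih =>
    rw [Finset.sum_Icc_succ_top (by omega : 1 ≤ N+1), ih]
    ring

lemma aux_sum_le {T : Finset ℕ} (N : ℕ) (hT : T ⊆ Icc 1 N) :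
    ∑ m ∈ T, ((1:ℝ)/2)^m ≤ 1 := by
  calc ∑ m ∈ T, ((1:ℝ)/2)^m ≤ ∑ m ∈ Icc 1 N, ((1:ℝ)/2)^m :=
        Finset.sum_le_sum_of_subset_of_nonneg hT (fun i _ _ => by positivity)
    _ = 1 - (1/2)^N := aux_geom N
    _ ≤ 1 := by nlinarith [pow_nonneg (by norm_num : (0:ℝ) ≤ 1/2) N]

lemma aux_prod_lower {T : Finset ℕ} (N : ℕ) (hT : T ⊆ Icc 1 N) :
    Real.exp (-2) ≤ ∏ m ∈ T, (1 - ((1:ℝ)/2)^m) := by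
  have key : ∀ m ∈ T, Real.exp (-(2*((1:ℝ)/2)^m)) ≤ 1 - ((1:ℝ)/2)^m := by
    intro m hm
    have hm1 : 1 ≤ m := (Finset.mem_Icc.mp (hT hm)).1
    refine aux_exp_le _ (by positivity) ?_
    calc ((1:ℝ)/2)^m ≤ (1/2)^1 := pow_le_pow_of_le_one (by norm_num) (by norm_num) hm1
      _ = 1/2 := pow_one _
  calc Real.exp (-2) ≤ Real.exp (∑ m ∈ T, -(2*((1:ℝ)/2)^m)) := by
        apply Real.exp_le_exp.mpr
        have := aux_sum_le N hT
        have : ∑ m ∈ T, -(2*((1:ℝ)/2)^m) = -(2 * ∑ m ∈ T, ((1:ℝ)/2)^m) := by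
          rw [Finset.mul_sum, ← Finset.sum_neg_distrib]
        rw [this]
        nlinarith
    _ = ∏ m ∈ T, Real.exp (-(2*((1:ℝ)/2)^m)) := Real.exp_sum _ _
    _ ≤ ∏ m ∈ T, (1 - ((1:ℝ)/2)^m) := by
        apply Finset.prod_le_prod (fun m _ => (Real.exp_pos _).le) key

lemma aux_prod_upper {T : Finset ℕ} (N : ℕ) (hT : T ⊆ Icc 1 N) :
    ∏ m ∈ T, (1 + ((1:ℝ)/2)^m) ≤ Real.exp 1 := by
  calc ∏ m ∈ T, (1 + ((1:ℝ)/2)^m) ≤ ∏ m ∈ T, Real.exp (((1:ℝ)/2)^m) := by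
        apply Finset.prod_le_prod (fun m _ => by positivity)
          (fun m _ => by rw [add_comm]; exact Real.add_one_le_exp _)
    _ = Real.exp (∑ m ∈ T, ((1:ℝ)/2)^m) := (Real.exp_sum _ _).symm
    _ ≤ Real.exp 1 := Real.exp_le_exp.mpr (aux_sum_le N hT)

open Real Filter Finset

/-- With the piecewise weight h associated to the lacunary product E, one has
|E'(λ)| ≍ e^{h(Rₙ)/2} · n · Rₙ^{−3/2} at every zero λ of E with |λ| = Rₙ. -/
theorem stmt_10 (R : ℕ → ℝ) (hR1 : 2 ≤ R 1) (hR : ∀ n ≥ 1, (R n) ^ 2 ≤ R (n + 1))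
    (E : ℂ → ℂ)
    (hE : TendstoLocallyUniformly
      (fun N : ℕ => fun z : ℂ => ∏ n ∈ Icc 1 N, (1 - (z / (R n : ℂ)) ^ n)) E atTop)
    (h : ℂ → ℝ)
    (hh : ∀ n : ℕ, 1 ≤ n → ∀ z : ℂ,
      R n ≤ ‖z‖ → ‖z‖ ≤ R (n + 1) →
      h z = Real.log (‖z‖)
        + 2 * ∑ s ∈ Icc 1 n, (s : ℝ) * (Real.log (‖z‖) - Real.log (R s))
        + n * min (Real.log (‖z‖) - Real.log (R n))
            (Real.log (R (n + 1)) - Real.log (‖z‖))) :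
    ∃ c > (0:ℝ), ∃ C > (0:ℝ), ∀ n : ℕ, 1 ≤ n → ∀ lam : ℂ,
      E lam = 0 → ‖lam‖ = R n →
      c * Real.exp (h (R n : ℂ) / 2) * n / (R n) ^ ((3:ℝ)/2)
          ≤ ‖deriv E lam‖ ∧
      ‖deriv E lam‖
          ≤ C * Real.exp (h (R n : ℂ) / 2) * n / (R n) ^ ((3:ℝ)/2) := by
  classical
  -- basic growth facts about R
  have hR2 : ∀ m, 1 ≤ m → 2 ≤ R m := by
    intro m hm
    induction m with
    | zero => omega
    | succ k ih =>
      rcases Nat.eq_or_lt_of_le hm with hk | hk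
      · simpa [← hk] using hR1
      · have hk1 : 1 ≤ k := by omega
        have h2 := ih hk1
        nlinarith [hR k hk1]
  have hRpos : ∀ m, 1 ≤ m → 0 < R m := fun m hm => lt_of_lt_of_le (by norm_num) (hR2 m hm)
  have hmono : ∀ m k, 1 ≤ m → m ≤ k → R m ≤ R k := by
    intro m k hm hmk
    induction k with
    | zero => omega
    | succ j ih =>
      rcases Nat.eq_or_lt_of_le hmk with hj | hj
      · rw [hj]
      · have hmj : m ≤ j := by omega
        have h1j : 1 ≤ j := by omega
        have := ih hmj
        nlinarith [hR j h1j, hR2 j h1j]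
  have hdouble : ∀ m k, 1 ≤ m → m < k → 2 * R m ≤ R k := by
    intro m k hm hmk
    have h1 : 2 * R m ≤ (R m)^2 := by nlinarith [hR2 m hm]
    have h2 : (R m)^2 ≤ R (m+1) := hR m hm
    have h3 : R (m+1) ≤ R k := hmono (m+1) k (by omega) (by omega)
    linarith
  refine ⟨Real.exp (-2), Real.exp_pos _, Real.exp 1, Real.exp_pos _, ?_⟩
  intro n hn lam hElam hlam
  set P : ℕ → ℂ → ℂ := fun N z => ∏ m ∈ Icc 1 N, (1 - (z / (R m : ℂ)) ^ m) with hP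
  have hRn := hRpos n hn
  have hRnC : (R n : ℂ) ≠ 0 := by exact_mod_cast hRn.ne'
  set w : ℕ → ℂ := fun m => (lam / (R m : ℂ)) ^ m with hw
  have habsw : ∀ m, 1 ≤ m → ‖w m‖ = (R n / R m) ^ m := by
    intro m hm
    simp only [hw, norm_pow, norm_div, Complex.norm_real, Real.norm_eq_abs, hlam,
      abs_of_pos (hRpos m hm)]
  set g : ℕ → ℝ := fun m => if m < n then (R n / R m) ^ m else 1 with hg
  have hgpos : ∀ m, 1 ≤ m → 0 < g m := by
    intro m hm
    simp only [hg]
    split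
    · exact pow_pos (div_pos hRn (hRpos m hm)) m
    · norm_num
  -- per-factor bounds
  have hfac : ∀ m, 1 ≤ m → m ≠ n →
      g m * (1 - ((1:ℝ)/2)^m) ≤ ‖1 - w m‖ ∧
      ‖1 - w m‖ ≤ g m * (1 + ((1:ℝ)/2)^m) := by
    intro m hm hmn
    have ha := habsw m hm
    have hRm := hRpos m hm
    have habs1 : ‖(1:ℂ)‖ = 1 := norm_one
    have hub : ‖1 - w m‖ ≤ 1 + ‖w m‖ := by
      calc ‖1 - w m‖ ≤ ‖1‖ + ‖-(w m)‖ :=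
            norm_add_le 1 (-(w m))
        _ = 1 + ‖w m‖ := by rw [habs1, norm_neg]
    have hlb1 : ‖w m‖ - 1 ≤ ‖1 - w m‖ := by
      have e1 : ‖1 - w m‖ = ‖w m - 1‖ := by
        rw [← neg_sub (w m) 1, norm_neg]
      have : ‖w m‖ ≤ ‖w m - 1‖ + 1 := by
        calc ‖w m‖ = ‖(w m - 1) + 1‖ := by ring_nf
          _ ≤ ‖w m - 1‖ + ‖1‖ := norm_add_le _ _
          _ = ‖w m - 1‖ + 1 := by rw [habs1]
      linarith [e1 ▸ this]
    have hlb2 : 1 - ‖w m‖ ≤ ‖1 - w m‖ := by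
      have : ‖(1:ℂ)‖ ≤ ‖1 - w m‖ + ‖w m‖ := by
        calc ‖(1:ℂ)‖ = ‖(1 - w m) + w m‖ := by ring_nf
          _ ≤ ‖1 - w m‖ + ‖w m‖ := norm_add_le _ _
      linarith [habs1 ▸ this]
    rcases lt_or_gt_of_ne hmn with hlt | hgt
    · -- m < n
      have hgm : g m = (R n / R m) ^ m := if_pos hlt
      have h2 : (2:ℝ)^m ≤ (R n / R m) ^ m := by
        apply pow_le_pow_left₀ (by norm_num)
        rw [le_div_iff₀ hRm]
        linarith [hdouble m n hm hlt]
      have hkey : 1 ≤ (R n / R m) ^ m * ((1:ℝ)/2)^m := by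
        have e2 : (2:ℝ)^m * ((1:ℝ)/2)^m = 1 := by
          rw [← mul_pow]; norm_num
        calc (1:ℝ) = (2:ℝ)^m * ((1:ℝ)/2)^m := e2.symm
          _ ≤ (R n / R m) ^ m * ((1:ℝ)/2)^m :=
            mul_le_mul_of_nonneg_right h2 (by positivity)
      rw [hgm]
      constructor
      · have := hlb1
        rw [ha] at this
        nlinarith
      · have := hub
        rw [ha] at this
        nlinarith
    · -- n < m
      have hgm : g m = 1 := if_neg (by omega)
      have hsm : ‖w m‖ ≤ ((1:ℝ)/2)^m := by
        rw [ha]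
        apply pow_le_pow_left₀ (div_nonneg hRn.le hRm.le)
        rw [div_le_iff₀ hRm]
        linarith [hdouble n m hn hgt]
      rw [hgm]
      constructor
      · rw [one_mul]; linarith
      · rw [one_mul]; linarith
  -- the finite set of other indices
  have hQdef : True := trivial
  set Q : ℝ := ∏ m ∈ (Icc 1 n).erase n, (R n / R m) ^ m with hQ
  have hQpos : 0 < Q := Finset.prod_pos (fun m hm => by
    have hm1 : 1 ≤ m := (Finset.mem_Icc.mp (Finset.mem_of_mem_erase hm)).1
    exact pow_pos (div_pos hRn (hRpos m hm1)) m)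
  have hQ1 : 1 ≤ Q := by
    rw [hQ]
    calc (1:ℝ) = ∏ _m ∈ (Icc 1 n).erase n, 1 := by simp
      _ ≤ ∏ m ∈ (Icc 1 n).erase n, (R n / R m) ^ m := by
          apply Finset.prod_le_prod (fun m _ => by norm_num)
          intro m hm
          have hm' := Finset.mem_Icc.mp (Finset.mem_of_mem_erase hm)
          have h1 : 1 ≤ R n / R m := (one_le_div (hRpos m hm'.1)).mpr (hmono m n hm'.1 hm'.2)
          exact one_le_pow₀ h1
  -- product over erase n of Icc 1 N equals Q times controlled factor
  have hprodG : ∀ N, n ≤ N → ∏ m ∈ (Icc 1 N).erase n, g m = Q := by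
    intro N hN
    have hsub : (Icc 1 n).erase n ⊆ (Icc 1 N).erase n :=
      Finset.erase_subset_erase n (Finset.Icc_subset_Icc_right hN)
    rw [← Finset.prod_subset hsub ?h1, hQ]
    · apply Finset.prod_congr rfl
      intro m hm
      have h1 := Finset.mem_erase.mp hm
      have h2 := Finset.mem_Icc.mp h1.2
      exact if_pos (by omega)
    case h1 =>
      intro m hm hm2
      have h1 := Finset.mem_erase.mp hm
      have h2 := Finset.mem_Icc.mp h1.2
      have hgt : n < m := by
        by_contra hc
        exact hm2 (Finset.mem_erase.mpr ⟨h1.1, Finset.mem_Icc.mpr ⟨h2.1, by omega⟩⟩)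
      exact if_neg (by omega)
  have hprodbounds : ∀ N, n ≤ N →
      Q * Real.exp (-2) ≤ ∏ m ∈ (Icc 1 N).erase n, ‖1 - w m‖ ∧
      ∏ m ∈ (Icc 1 N).erase n, ‖1 - w m‖ ≤ Q * Real.exp 1 := by
    intro N hN
    set T := (Icc 1 N).erase n with hT
    have hTsub : T ⊆ Icc 1 N := Finset.erase_subset _ _
    have hTmem : ∀ m ∈ T, 1 ≤ m ∧ m ≠ n := by
      intro m hm
      have h1 := Finset.mem_erase.mp hm
      exact ⟨(Finset.mem_Icc.mp h1.2).1, h1.1⟩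
    have hhalf : ∀ m : ℕ, 0 ≤ 1 - ((1:ℝ)/2)^m := by
      intro m
      have : ((1:ℝ)/2)^m ≤ 1 := pow_le_one₀ (by norm_num) (by norm_num)
      linarith
    constructor
    · calc Q * Real.exp (-2) = (∏ m ∈ T, g m) * Real.exp (-2) := by rw [hprodG N hN]
        _ ≤ (∏ m ∈ T, g m) * ∏ m ∈ T, (1 - ((1:ℝ)/2)^m) := by
            apply mul_le_mul_of_nonneg_left (aux_prod_lower N hTsub)
            exact Finset.prod_nonneg (fun m hm => (hgpos m (hTmem m hm).1).le)
        _ = ∏ m ∈ T, (g m * (1 - ((1:ℝ)/2)^m)) := (Finset.prod_mul_distrib).symm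
        _ ≤ ∏ m ∈ T, ‖1 - w m‖ := by
            apply Finset.prod_le_prod
            · intro m hm
              exact mul_nonneg (hgpos m (hTmem m hm).1).le (hhalf m)
            · intro m hm
              exact (hfac m (hTmem m hm).1 (hTmem m hm).2).1
    · calc ∏ m ∈ T, ‖1 - w m‖
          ≤ ∏ m ∈ T, (g m * (1 + ((1:ℝ)/2)^m)) := by
            apply Finset.prod_le_prod
            · intro m hm; exact norm_nonneg _
            · intro m hm
              exact (hfac m (hTmem m hm).1 (hTmem m hm).2).2
        _ = (∏ m ∈ T, g m) * ∏ m ∈ T, (1 + ((1:ℝ)/2)^m) := Finset.prod_mul_distrib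
        _ ≤ Q * Real.exp 1 := by
            rw [hprodG N hN]
            apply mul_le_mul_of_nonneg_left (aux_prod_upper N hTsub) hQpos.le
  -- the n-th factor vanishes
  -- pointwise convergence at lam
  have hptw : Tendsto (fun N => P N lam) atTop (nhds (0:ℂ)) := by
    have := (tendstoLocallyUniformlyOn_univ.mpr hE).tendsto_at (Set.mem_univ lam)
    rwa [hElam] at this
  have habsP : ∀ N, ‖P N lam‖ = ∏ m ∈ Icc 1 N, ‖1 - w m‖ := by
    intro N
    simp only [hP]
    exact norm_prod _ _
  have hwn : w n = 1 := by
    have habstend : Tendsto (fun N => ‖P N lam‖) atTop (nhds 0) := by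
      have := (continuous_norm.tendsto 0).comp hptw
      simpa [Function.comp_def] using this
    have hlb : ∀ N, n ≤ N →
        ‖1 - w n‖ * Real.exp (-2) ≤ ‖P N lam‖ := by
      intro N hN
      rw [habsP N, ← Finset.mul_prod_erase _ _ (Finset.mem_Icc.mpr ⟨hn, hN⟩)]
      have h1 := (hprodbounds N hN).1
      have h2 : Real.exp (-2) ≤ Q * Real.exp (-2) := by
        nlinarith [Real.exp_pos (-2:ℝ)]
      have h3 : Real.exp (-2) ≤ ∏ m ∈ (Icc 1 N).erase n, ‖1 - w m‖ := by
        linarith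
      exact mul_le_mul_of_nonneg_left h3 (norm_nonneg _)
    have hfin : ‖1 - w n‖ * Real.exp (-2) ≤ 0 := by
      refine ge_of_tendsto habstend ?_
      filter_upwards [eventually_ge_atTop n] with N hN using hlb N hN
    have : ‖1 - w n‖ = 0 := by
      nlinarith [Real.exp_pos (-2:ℝ), norm_nonneg (1 - w n)]
    have := norm_eq_zero.mp this
    have : (1:ℂ) = w n := by linear_combination this
    exact this.symm
  -- derivative of partial products at lam
  have hderivP : ∀ N, n ≤ N → ‖deriv (P N) lam‖
      = (n / R n) * ∏ m ∈ (Icc 1 N).erase n, ‖1 - w m‖ := by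
    intro N hN
    have hd : ∀ (m : ℕ) (x : ℂ), HasDerivAt (fun z : ℂ => 1 - (z/(R m:ℂ))^m)
        (-(↑m * (x/(R m:ℂ))^(m-1) * (1/(R m:ℂ)))) x := by
      intro m x
      have h1 : HasDerivAt (fun z : ℂ => z/(R m:ℂ)) (1/(R m:ℂ)) x := by
        simpa using (hasDerivAt_id x).div_const ((R m : ℂ))
      exact (h1.pow m).const_sub 1
    have hPd : HasDerivAt (P N)
        (∑ i ∈ Icc 1 N, (∏ j ∈ (Icc 1 N).erase i, (1 - (lam/(R j:ℂ))^j))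
            • (-(↑i * (lam/(R i:ℂ))^(i-1) * (1/(R i:ℂ))))) lam :=
      HasDerivAt.fun_finsetProd (fun i _ => hd i lam)
    have hsum : (∑ i ∈ Icc 1 N, (∏ j ∈ (Icc 1 N).erase i, (1 - (lam/(R j:ℂ))^j))
            • (-(↑i * (lam/(R i:ℂ))^(i-1) * (1/(R i:ℂ)))))
        = (∏ j ∈ (Icc 1 N).erase n, (1 - (lam/(R j:ℂ))^j))
            • (-(↑n * (lam/(R n:ℂ))^(n-1) * (1/(R n:ℂ)))) := by
      apply Finset.sum_eq_single_of_mem n (Finset.mem_Icc.mpr ⟨hn, hN⟩)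
      intro i hi hin
      have hnmem : n ∈ (Icc 1 N).erase i :=
        Finset.mem_erase.mpr ⟨Ne.symm hin, Finset.mem_Icc.mpr ⟨hn, hN⟩⟩
      have hz : (1 - (lam/(R n:ℂ))^n) = 0 := by
        have : w n = 1 := hwn
        simp only [hw] at this
        rw [this, sub_self]
      rw [Finset.prod_eq_zero hnmem hz, zero_smul]
    have habsfac : ‖-(↑n * (lam/(R n:ℂ))^(n-1) * (1/(R n:ℂ)))‖ = ↑n / R n := by
      have hq : ‖lam/(R n:ℂ)‖ = 1 := by
        rw [norm_div, Complex.norm_real, Real.norm_eq_abs, hlam, abs_of_pos hRn, div_self hRn.ne']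
      rw [norm_neg, norm_mul, norm_mul, norm_pow, hq, norm_div, norm_one,
        Complex.norm_natCast, Complex.norm_real, Real.norm_eq_abs, abs_of_pos hRn, one_pow, mul_one,
        mul_one_div]
    rw [hPd.deriv, hsum, smul_eq_mul, norm_mul, habsfac, norm_prod, mul_comm]
  -- convergence of derivatives
  have htend : Tendsto (fun N => ‖deriv (P N) lam‖) atTop
      (nhds (‖deriv E lam‖)) := by
    have hd : ∀ (m : ℕ) (x : ℂ), HasDerivAt (fun z : ℂ => 1 - (z/(R m:ℂ))^m)
        (-(↑m * (x/(R m:ℂ))^(m-1) * (1/(R m:ℂ)))) x := by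
      intro m x
      have h1 : HasDerivAt (fun z : ℂ => z/(R m:ℂ)) (1/(R m:ℂ)) x := by
        simpa using (hasDerivAt_id x).div_const ((R m : ℂ))
      exact (h1.pow m).const_sub 1
    have h1 : TendstoLocallyUniformlyOn P E atTop Set.univ :=
      tendstoLocallyUniformlyOn_univ.mpr hE
    have hdiffP : ∀ᶠ N in atTop, DifferentiableOn ℂ (P N) Set.univ := by
      refine Eventually.of_forall (fun N z _ => ?_)
      exact (HasDerivAt.fun_finsetProd (fun i _ => hd i z)).differentiableAt.differentiableWithinAt
    have h2 := h1.deriv hdiffP isOpen_univ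
    have h3 : Tendsto (fun N => deriv (P N) lam) atTop (nhds (deriv E lam)) :=
      h2.tendsto_at (Set.mem_univ lam)
    have := (continuous_norm.tendsto (deriv E lam)).comp h3
    simpa [Function.comp_def] using this
  -- two-sided limit bounds
  have hlow : Real.exp (-2) * (Q * n / R n) ≤ ‖deriv E lam‖ := by
    refine ge_of_tendsto htend ?_
    filter_upwards [eventually_ge_atTop n] with N hN
    rw [hderivP N hN]
    have := (hprodbounds N hN).1
    have hn0 : (1:ℝ) ≤ n := by exact_mod_cast hn
    have h1 : Real.exp (-2) * (Q * ↑n / R n) = ↑n / R n * (Q * Real.exp (-2)) := by ring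
    rw [h1]
    exact mul_le_mul_of_nonneg_left this (div_nonneg (Nat.cast_nonneg n) hRn.le)
  have hhigh : ‖deriv E lam‖ ≤ Real.exp 1 * (Q * n / R n) := by
    refine le_of_tendsto htend ?_
    filter_upwards [eventually_ge_atTop n] with N hN
    rw [hderivP N hN]
    have := (hprodbounds N hN).2
    have hn0 : (1:ℝ) ≤ n := by exact_mod_cast hn
    have h1 : Real.exp 1 * (Q * ↑n / R n) = ↑n / R n * (Q * Real.exp 1) := by ring
    rw [h1]
    exact mul_le_mul_of_nonneg_left this (div_nonneg (Nat.cast_nonneg n) hRn.le)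
  -- identify exp(h(R n)/2)
  have hexph : Real.exp (h (R n : ℂ) / 2) = R n ^ ((1:ℝ)/2) * Q := by
    have habsRn : ‖((R n : ℝ) : ℂ)‖ = R n := by
      rw [Complex.norm_real, Real.norm_eq_abs, abs_of_pos hRn]
    have hRn1 : R n ≤ R (n+1) := by nlinarith [hR n hn, hR2 n hn]
    have hval := hh n hn ((R n : ℝ) : ℂ) (by rw [habsRn]) (by rw [habsRn]; exact hRn1)
    rw [habsRn] at hval
    have hmin : min (Real.log (R n) - Real.log (R n))
        (Real.log (R (n+1)) - Real.log (R n)) = Real.log (R n) - Real.log (R n) := by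
      apply min_eq_left
      have := Real.log_le_log hRn hRn1
      linarith
    rw [hmin, sub_self, mul_zero, add_zero] at hval
    have hS : ∑ s ∈ Icc 1 n, (s:ℝ) * (Real.log (R n) - Real.log (R s))
        = ∑ s ∈ (Icc 1 n).erase n, (s:ℝ) * (Real.log (R n) - Real.log (R s)) := by
      have := Finset.add_sum_erase (Icc 1 n)
        (fun s => (s:ℝ) * (Real.log (R n) - Real.log (R s)))
        (Finset.mem_Icc.mpr ⟨hn, le_refl n⟩)
      simp only [sub_self, mul_zero, zero_add] at this
      exact this.symm
    rw [hval, hS]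
    have hsplit : (Real.log (R n)
        + 2 * ∑ s ∈ (Icc 1 n).erase n, (s:ℝ) * (Real.log (R n) - Real.log (R s))) / 2
        = Real.log (R n) * (1/2)
          + ∑ s ∈ (Icc 1 n).erase n, (s:ℝ) * (Real.log (R n) - Real.log (R s)) := by
      ring
    rw [hsplit, Real.exp_add]
    congr 1
    · exact (Real.rpow_def_of_pos hRn _).symm
    · rw [Real.exp_sum, hQ]
      apply Finset.prod_congr rfl
      intro s hs
      have hs1 : 1 ≤ s := (Finset.mem_Icc.mp (Finset.mem_of_mem_erase hs)).1
      have hRs := hRpos s hs1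
      rw [← Real.log_div hRn.ne' hRs.ne',
        Real.exp_nat_mul, Real.exp_log (div_pos hRn hRs)]
  have hr32 : (R n) ^ ((3:ℝ)/2) = R n ^ ((1:ℝ)/2) * R n := by
    have h32 : ((3:ℝ)/2) = 1/2 + 1 := by norm_num
    rw [h32, Real.rpow_add hRn, Real.rpow_one]
  have hrpos : (0:ℝ) < R n ^ ((1:ℝ)/2) := Real.rpow_pos_of_pos hRn _
  constructor
  · calc Real.exp (-2) * Real.exp (h (R n : ℂ) / 2) * n / (R n) ^ ((3:ℝ)/2)
        = Real.exp (-2) * (Q * n / R n) := by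
          rw [hexph, hr32]; field_simp
      _ ≤ ‖deriv E lam‖ := hlow
  · calc ‖deriv E lam‖ ≤ Real.exp 1 * (Q * n / R n) := hhigh
      _ = Real.exp 1 * Real.exp (h (R n : ℂ) / 2) * n / (R n) ^ ((3:ℝ)/2) := by
          rw [hexph, hr32]; field_simp
end

section
/- Let {R_n} satisfy R₁ ≥ 2, R_{n+1} ≥ R_n², let E(z) = ∏_{n≥1}(1 − (z/R_n)ⁿ), and let h be the associated weight with |E(z)|² e^{−h(z)} ≍ n² dist²(z, Λ)/R_n³ on the annulus ||z| − R_n| ≤ R_n/n, where Λ = Z(E). Then for every entire function F ≢ 0, ∫_ℂ |F(z)|² |E(z)|² e^{−h(z)} dm(z) = ∞; in particular F·E ∉ F_h. -/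
open Real Filter Finset MeasureTheory

section Helpers

lemma polar_symm_eq_circleMap (r θ : ℝ) :
    Complex.polarCoord.symm (r, θ) = circleMap 0 r θ := by
  rw [Complex.polarCoord_symm_apply, circleMap, Complex.exp_mul_I]
  push_cast
  simp [Complex.cos_ofReal_re]

lemma circle_cauchy (F : ℂ → ℂ) (hF : Differentiable ℂ F) (z₀ : ℂ) {r : ℝ}
    (hr : ‖z₀‖ < r) :
    ∫ θ in (0:ℝ)..(2*π), circleMap 0 r θ * F (circleMap 0 r θ) / (circleMap 0 r θ - z₀)
      = (2*π : ℝ) • F z₀ := by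
  have hz₀ : z₀ ∈ Metric.ball (0:ℂ) r := by
    simpa [Metric.mem_ball, Complex.dist_eq] using hr
  have h := (hF.diffContOnCl (s := Metric.ball (0:ℂ) r)).circleIntegral_sub_inv_smul hz₀
  rw [circleIntegral] at h
  simp only [deriv_circleMap, smul_eq_mul] at h
  have h2 : ∫ θ in (0:ℝ)..(2*π), Complex.I * (circleMap 0 r θ * F (circleMap 0 r θ) / (circleMap 0 r θ - z₀))
      = 2 * π * Complex.I * F z₀ := by
    rw [← h]; congr 1; ext θ; ring
  rw [intervalIntegral.integral_const_mul] at h2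
  apply mul_left_cancel₀ Complex.I_ne_zero
  rw [h2, Complex.real_smul]
  push_cast
  ring

lemma annulus_cauchy (F : ℂ → ℂ) (hF : Differentiable ℂ F) (z₀ : ℂ) {a b : ℝ}
    (ha : ‖z₀‖ < a) (hab : a < b) :
    ∫ z in {z : ℂ | a < ‖z‖ ∧ ‖z‖ < b},
        (‖z‖ : ℂ)⁻¹ * (z * F z / (z - z₀)) = (2*π*(b-a) : ℝ) • F z₀ := by
  have ha0 : 0 < a := lt_of_le_of_lt (norm_nonneg z₀) ha
  set ψ : ℂ → ℂ := fun z => z * F z / (z - z₀) with hψ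
  set g : ℂ → ℂ := fun z => (‖z‖ : ℂ)⁻¹ * (z * F z / (z - z₀)) with hg
  set A : Set ℂ := {z : ℂ | a < ‖z‖ ∧ ‖z‖ < b} with hAdef
  have hAopen : IsOpen A := by
    have : A = (fun z : ℂ => ‖z‖) ⁻¹' (Set.Ioo a b) := rfl
    rw [this]
    exact isOpen_Ioo.preimage continuous_norm
  have hsymm : Continuous (fun p : ℝ × ℝ => Complex.polarCoord.symm p) := by
    simp only [Complex.polarCoord_symm_apply]
    continuity
  have hne : ∀ p : ℝ × ℝ, a ≤ p.1 → Complex.polarCoord.symm p - z₀ ≠ 0 := by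
    intro p hp
    have habs : ‖Complex.polarCoord.symm p‖ = |p.1| := Complex.norm_polarCoord_symm p
    have : ‖z₀‖ < ‖Complex.polarCoord.symm p‖ := by
      rw [habs]
      calc ‖z₀‖ < a := ha
      _ ≤ p.1 := hp
      _ ≤ |p.1| := le_abs_self _
    exact sub_ne_zero.2 fun hzz => by simp [hzz] at this
  have hcont : ContinuousOn (fun p : ℝ × ℝ => ψ (Complex.polarCoord.symm p))
      (Set.Icc a b ×ˢ Set.Icc (-π) π) := by
    apply ContinuousOn.div
    · exact ((hsymm.continuousOn).mul ((hF.continuous.comp hsymm).continuousOn))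
    · exact (hsymm.continuousOn).sub continuousOn_const
    · intro p hp
      exact hne p (Set.mem_prod.1 hp).1.1
  have hint : IntegrableOn (fun p : ℝ × ℝ => ψ (Complex.polarCoord.symm p))
      (Set.Ioo a b ×ˢ Set.Ioo (-π) π) := by
    apply (hcont.integrableOn_compact (isCompact_Icc.prod isCompact_Icc)).mono_set
    exact Set.prod_mono Set.Ioo_subset_Icc_self Set.Ioo_subset_Icc_self
  rw [← integral_indicator hAopen.measurableSet,
    ← Complex.integral_comp_polarCoord_symm (A.indicator g)]
  have key : Set.EqOn (fun p : ℝ × ℝ => p.1 • (A.indicator g) (Complex.polarCoord.symm p))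
      ((Set.Ioo a b ×ˢ Set.Ioo (-π) π).indicator (fun q => ψ (Complex.polarCoord.symm q)))
      polarCoord.target := by
    intro p hp
    rw [show polarCoord.target = Set.Ioi (0:ℝ) ×ˢ Set.Ioo (-π) π from rfl] at hp
    obtain ⟨hp1, hp2⟩ := Set.mem_prod.1 hp
    have hr0 : 0 < p.1 := hp1
    have habs : ‖Complex.polarCoord.symm p‖ = p.1 := by
      rw [Complex.norm_polarCoord_symm, abs_of_pos hr0]
    have hmem : Complex.polarCoord.symm p ∈ A ↔ p ∈ Set.Ioo a b ×ˢ Set.Ioo (-π) π := by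
      simp only [hAdef, Set.mem_setOf_eq, habs, Set.mem_prod, Set.mem_Ioo]
      exact ⟨fun h => ⟨h, hp2⟩, fun h => h.1⟩
    dsimp only
    by_cases hcase : p ∈ Set.Ioo a b ×ˢ Set.Ioo (-π) π
    · rw [Set.indicator_of_mem hcase, Set.indicator_of_mem (hmem.2 hcase)]
      simp only [hg, habs, smul_eq_mul, Complex.real_smul]
      rw [← mul_assoc]
      rw [mul_inv_cancel₀ (by exact_mod_cast hr0.ne')]
      simp [hψ]
    · rw [Set.indicator_of_notMem hcase, Set.indicator_of_notMem (fun h => hcase ((hmem).1 h))]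
      simp
  rw [setIntegral_congr_fun polarCoord.open_target.measurableSet key,
    setIntegral_indicator (measurableSet_Ioo.prod measurableSet_Ioo)]
  have hsub : (Set.Ioo a b ×ˢ Set.Ioo (-π) π) ⊆ polarCoord.target := by
    rw [show polarCoord.target = Set.Ioi (0:ℝ) ×ˢ Set.Ioo (-π) π from rfl]
    exact Set.prod_mono (fun x hx => lt_trans ha0 hx.1) subset_rfl
  rw [Set.inter_eq_self_of_subset_right hsub]
  rw [Measure.volume_eq_prod, ← Measure.prod_restrict,
    integral_prod _ (by rwa [Measure.prod_restrict, ← Measure.volume_eq_prod])]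
  have inner : ∀ r ∈ Set.Ioo a b,
      (∫ θ in Set.Ioo (-π) π, ψ (Complex.polarCoord.symm (r, θ))) = (2*π:ℝ) • F z₀ := by
    intro r hr
    have har : ‖z₀‖ < r := ha.trans hr.1
    rw [← integral_Ioc_eq_integral_Ioo,
      ← intervalIntegral.integral_of_le (by linarith [pi_pos] : -π ≤ π)]
    simp only [polar_symm_eq_circleMap]
    have hper : Function.Periodic (fun θ => ψ (circleMap 0 r θ)) (2*π) :=
      (periodic_circleMap 0 r).comp ψ
    have heq := hper.intervalIntegral_add_eq (-π) 0
    rw [show -π + 2*π = π by ring, show (0:ℝ) + 2*π = 2*π by ring] at heq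
    rw [heq]
    exact circle_cauchy F hF z₀ har
  rw [setIntegral_congr_fun measurableSet_Ioo inner, setIntegral_const, Real.volume_real_Ioo_of_le hab.le,
    smul_smul]
  congr 1
  ring

lemma weier (s : Finset ℕ) (t : ℕ → ℝ) (h0 : ∀ i ∈ s, 0 ≤ t i) (h1 : ∀ i ∈ s, t i ≤ 1) :
    1 - ∑ i ∈ s, t i ≤ ∏ i ∈ s, (1 - t i) := by
  induction s using Finset.cons_induction with
  | empty => simp
  | cons a s ha ih =>
    rw [Finset.sum_cons, Finset.prod_cons]
    have h0a := h0 a (Finset.mem_cons_self a s)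
    have h1a := h1 a (Finset.mem_cons_self a s)
    have ihs := ih (fun i hi => h0 i (Finset.mem_cons_of_mem hi))
      (fun i hi => h1 i (Finset.mem_cons_of_mem hi))
    have hsum : 0 ≤ ∑ i ∈ s, t i := Finset.sum_nonneg (fun i hi => h0 i (Finset.mem_cons_of_mem hi))
    nlinarith

lemma geom_tail : ∀ (n N : ℕ), n ≤ N → (∑ m ∈ Finset.Ioc n N, ((1:ℝ)/2)^(m-n)) = 1 - (1/2)^(N-n) := by
  intro n N hN
  induction N, hN using Nat.le_induction with
  | base => simp
  | succ N hN ih =>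
    rw [Finset.sum_Ioc_succ_top (by omega : n ≤ N), ih]
    have h1 : N + 1 - n = (N - n) + 1 := by omega
    rw [h1, pow_succ]
    ring

end Helpers

section Rfacts
variable {R : ℕ → ℝ} (hR1 : 2 ≤ R 1) (hR : ∀ n ≥ 1, (R n) ^ 2 ≤ R (n + 1))
include hR1 hR

lemma R_ge_two : ∀ n, 1 ≤ n → (2:ℝ) ≤ R n := by
  intro n hn
  induction n with
  | zero => omega
  | succ k ih =>
    rcases Nat.eq_or_lt_of_le hn with h | h
    · simpa [← h] using hR1
    · have hk : 1 ≤ k := by omega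
      have h2 := ih hk
      nlinarith [hR k hk]

lemma R_mono : ∀ m n, 1 ≤ m → m ≤ n → R m ≤ R n := by
  intro m n hm hmn
  induction n with
  | zero => omega
  | succ k ih =>
    rcases Nat.eq_or_lt_of_le hmn with h | h
    · simp [h]
    · have hk : m ≤ k := by omega
      have h1 := ih hk
      have h2 := R_ge_two hR1 hR k (le_trans hm hk)
      nlinarith [hR k (le_trans hm hk)]

lemma R_sq_le : ∀ m n, 1 ≤ m → m < n → (R m)^2 ≤ R n := by
  intro m n hm hmn
  exact le_trans (hR m hm) (R_mono hR1 hR (m+1) n (by omega) (by omega))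

lemma R_pow : ∀ n : ℕ, 1 ≤ n → (2:ℝ)^n ≤ R n := by
  intro n hn
  induction n with
  | zero => omega
  | succ k ih =>
    rcases Nat.eq_or_lt_of_le hn with h | h
    · simpa [← h] using hR1
    · have hk : 1 ≤ k := by omega
      have h1 := ih hk
      have h2 := R_ge_two hR1 hR k hk
      have h3 : (2:ℝ)^k ≥ 2 := by
        calc (2:ℝ)^k ≥ 2^1 := by apply pow_le_pow_right₀ (by norm_num); omega
        _ = 2 := by norm_num
      calc (2:ℝ)^(k+1) = 2 * 2^k := by ring
      _ ≤ R k * R k := by nlinarith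
      _ ≤ R (k+1) := by nlinarith [hR k hk]

lemma R_tail : ∀ n, 1 ≤ n → ∀ m, n < m → R n ^ 2 * 2^(m-n-1) ≤ R m := by
  intro n hn m hm
  induction m with
  | zero => omega
  | succ k ih =>
    rcases Nat.eq_or_lt_of_le hm with h | h
    · have hnk : n = k := by omega
      subst hnk
      have : n + 1 - n - 1 = 0 := by omega
      rw [this]
      simpa using hR n hn
    · have hk : n < k := by omega
      have h1 := ih hk
      have h2 := R_ge_two hR1 hR k (by omega)
      have h3 : k + 1 - n - 1 = (k - n - 1) + 1 := by omega
      have h4 : (0:ℝ) < 2^(k-n-1) := by positivity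
      have h5 : (0:ℝ) ≤ R n ^ 2 := sq_nonneg _
      rw [h3, pow_succ]
      calc R n ^ 2 * (2^(k-n-1) * 2) = 2 * (R n ^2 * 2^(k-n-1)) := by ring
      _ ≤ 2 * R k := by nlinarith
      _ ≤ R k * R k := by nlinarith
      _ ≤ R (k+1) := by nlinarith [hR k (by omega : 1 ≤ k)]

lemma R_cube : ∀ n : ℕ, 10 ≤ n → (n:ℝ)^3 ≤ R n := by
  intro n hn
  induction n with
  | zero => omega
  | succ k ih =>
    rcases Nat.eq_or_lt_of_le hn with h | h
    · have h1 := R_pow hR1 hR 10 (by omega)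
      rw [← h]
      norm_num at h1 ⊢
      linarith
    · have hk : 10 ≤ k := by omega
      have h1 := ih hk
      have hk1 : (10:ℝ) ≤ (k:ℝ) := by exact_mod_cast hk
      have h2 := hR k (by omega : 1 ≤ k)
      have hk0 : (0:ℝ) ≤ (k:ℝ)^3 := by positivity
      have h3 : ((k:ℝ))^6 ≤ R k ^ 2 := by nlinarith [sq_nonneg ((k:ℝ)^3 - R k)]
      have h4 : ((k:ℝ)+1)^3 ≤ ((k:ℝ))^6 := by
        have e1 : ((k:ℝ)+1)^3 ≤ (2*(k:ℝ))^3 :=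
          pow_le_pow_left₀ (by positivity) (by linarith) 3
        have e2 : (2*(k:ℝ))^3 = 8 * (k:ℝ)^3 := by ring
        have e4 : (1000:ℝ) ≤ (k:ℝ)^3 := by
          calc (1000:ℝ) = 10^3 := by norm_num
          _ ≤ (k:ℝ)^3 := pow_le_pow_left₀ (by norm_num) hk1 3
        have e3 : (8:ℝ) * (k:ℝ)^3 ≤ (k:ℝ)^3 * (k:ℝ)^3 := by nlinarith
        nlinarith
      push_cast
      linarith

set_option maxHeartbeats 1000000 in
omit hR1 hR in
lemma prod_lower
    (R_ge_two' : ∀ n, 1 ≤ n → (2:ℝ) ≤ R n)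
    (R_sq_le' : ∀ m n, 1 ≤ m → m < n → (R m)^2 ≤ R n)
    (R_pow' : ∀ n : ℕ, 1 ≤ n → (2:ℝ)^n ≤ R n)
    (R_tail' : ∀ n, 1 ≤ n → ∀ m, n < m → R n ^ 2 * 2^(m-n-1) ≤ R m)
    (n : ℕ) (hn : 3 ≤ n) (w : ℂ)
    (hw1 : R n * (1 + 3/(8*(n:ℝ))) ≤ ‖w‖)
    (hw2 : ‖w‖ ≤ R n * (1 + 7/(8*(n:ℝ)))) :
    ∀ N, n ≤ N → (3/16 : ℝ) ≤ ‖∏ m ∈ Finset.Icc 1 N, (1 - (w / (R m : ℂ)) ^ m)‖ := by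
  intro N hN
  have hn0 : (0:ℝ) < n := by positivity
  have hRn2 : (2:ℝ) ≤ R n := R_ge_two' n (by omega)
  have hRn0 : (0:ℝ) < R n := by linarith
  have hRn8 : (8:ℝ) ≤ R n := by
    calc (8:ℝ) = 2^3 := by norm_num
    _ ≤ 2^n := by apply pow_le_pow_right₀ (by norm_num) hn
    _ ≤ R n := R_pow' n (by omega)
  set A := ‖w‖ with hA
  have he0 : (0:ℝ) ≤ 3/(8*(n:ℝ)) := by positivity
  have he1 : 7/(8*(n:ℝ)) ≤ 1 := by
    rw [div_le_one (by positivity)]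
    have : (1:ℝ) ≤ (n:ℝ) := by exact_mod_cast (by omega : 1 ≤ n)
    linarith
  have hA1 : R n ≤ A := by nlinarith [mul_nonneg hRn0.le he0]
  have hA2 : A ≤ 2 * R n := by nlinarith [mul_le_mul_of_nonneg_left he1 hRn0.le]
  set g : ℕ → ℝ := fun m => if m < n then 1 else if m = n then 3/8 else 1 - 4/(R n * 2^(m-n)) with hg
  have habs : ∀ m, 1 ≤ m → ‖(w / (R m : ℂ)) ^ m‖ = (A / R m)^m := by
    intro m hm
    have : (0:ℝ) < R m := by linarith [R_ge_two' m hm]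
    rw [norm_pow, norm_div, Complex.norm_real, Real.norm_eq_abs, abs_of_pos this]
  have htm : ∀ m, n < m → (0:ℝ) < 4/(R n * 2^(m-n)) ∧ 4/(R n * 2^(m-n)) ≤ 1/4 := by
    intro m hm
    refine ⟨by positivity, ?_⟩
    have h2 : (2:ℝ) ≤ 2^(m-n) := by
      calc (2:ℝ) = 2^1 := by norm_num
      _ ≤ 2^(m-n) := by apply pow_le_pow_right₀ (by norm_num); omega
    rw [div_le_iff₀ (by positivity)]
    nlinarith
  have key : ∀ m ∈ Finset.Icc 1 N, g m ≤ ‖1 - (w / (R m : ℂ)) ^ m‖ := by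
    intro m hm
    rw [Finset.mem_Icc] at hm
    have hm1 : 1 ≤ m := hm.1
    have hRm0 : (0:ℝ) < R m := by linarith [R_ge_two' m hm1]
    have hlow : ‖(w / (R m : ℂ)) ^ m‖ - 1 ≤ ‖1 - (w / (R m : ℂ)) ^ m‖ := by
      rw [norm_sub_rev]
      have := norm_sub_norm_le ((w / (R m : ℂ)) ^ m) 1
      simpa using this
    have hup : 1 - ‖(w / (R m : ℂ)) ^ m‖ ≤ ‖1 - (w / (R m : ℂ)) ^ m‖ := by
      have := norm_sub_norm_le (1:ℂ) ((w / (R m : ℂ)) ^ m)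
      simpa using this
    rcases lt_trichotomy m n with hmn | hmn | hmn
    · have h1 : (2:ℝ) ≤ A / R m := by
        rw [le_div_iff₀ hRm0]
        nlinarith [R_sq_le' m n hm1 hmn, R_ge_two' m hm1]
      have h2 : (2:ℝ) ≤ (A / R m)^m := by
        calc (2:ℝ) = 2^1 := by norm_num
        _ ≤ 2^m := by apply pow_le_pow_right₀ (by norm_num) hm1
        _ ≤ (A / R m)^m := pow_le_pow_left₀ (by norm_num) h1 m
      simp only [hg]
      simp only [if_pos hmn]
      rw [habs m hm1] at hlow
      linarith
    · subst hmn
      have h1 : 1 + 3/(8*(m:ℝ)) ≤ A / R m := by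
        rw [le_div_iff₀ hRm0]
        nlinarith
      have hbpos : (0:ℝ) ≤ 3/(8*(m:ℝ)) := by positivity
      have hb : (-2:ℝ) ≤ 3/(8*(m:ℝ)) := by linarith
      have h2' := one_add_mul_le_pow hb m
      have h3 : (m:ℝ) * (3/(8*(m:ℝ))) = 3/8 := by
        field_simp
      have h2 : (1 + 3/8 : ℝ) ≤ (A / R m)^m := by
        calc (1 + 3/8 : ℝ) = 1 + (m:ℝ) * (3/(8*(m:ℝ))) := by rw [h3]
        _ ≤ (1 + 3/(8*(m:ℝ)))^m := h2'
        _ ≤ (A / R m)^m := pow_le_pow_left₀ (by positivity) h1 m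
      simp only [hg]
      simp only [lt_irrefl, if_neg (lt_irrefl m), if_pos rfl, if_true, if_false]
      rw [habs m hm1] at hlow
      norm_num at *
      linarith
    · have ht := R_tail' n (by omega) m hmn
      have hRm' : (0:ℝ) < R n ^2 * 2^(m-n-1) := by positivity
      have e1 : A / R m ≤ 2 * R n / (R n ^2 * 2^(m-n-1)) :=
        div_le_div₀ (by positivity) hA2 hRm' ht
      have e2 : 2 * R n / (R n ^2 * 2^(m-n-1)) = 4/(R n * 2^(m-n)) := by
        have h3 : (2:ℝ)^(m-n) = 2^(m-n-1) * 2 := by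
          rw [← pow_succ]
          congr 1
          omega
        rw [h3]
        field_simp
        ring
      have hAm : A / R m ≤ 4/(R n * 2^(m-n)) := by rw [← e2]; exact e1
      have h0 := htm m hmn
      have hAm1 : A / R m ≤ 1 := by linarith
      have hAm0 : (0:ℝ) ≤ A / R m := by positivity
      have hx : ‖(w / (R m : ℂ)) ^ m‖ ≤ 4/(R n * 2^(m-n)) := by
        rw [habs m hm1]
        calc (A / R m)^m ≤ (A / R m)^1 := pow_le_pow_of_le_one hAm0 hAm1 hm1
        _ = A / R m := pow_one _
        _ ≤ _ := hAm
      simp only [hg]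
      simp only [if_neg (by omega : ¬ m < n), if_neg (by omega : ¬ m = n)]
      linarith
  have hg0 : ∀ m ∈ Finset.Icc 1 N, 0 ≤ g m := by
    intro m hm
    simp only [hg]
    split_ifs with h1 h2
    · norm_num
    · norm_num
    · have := htm m (by omega)
      linarith [this.2]
  have hprod : ∏ m ∈ Finset.Icc 1 N, g m
      ≤ ‖∏ m ∈ Finset.Icc 1 N, (1 - (w / (R m : ℂ)) ^ m)‖ := by
    rw [norm_prod]
    exact Finset.prod_le_prod hg0 key
  have hsplit : Finset.Icc 1 N = Finset.Ioc 0 N := by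
    rw [← Finset.Icc_add_one_left_eq_Ioc]; rfl
  have htail : (1/2:ℝ) ≤ ∏ m ∈ Finset.Ioc n N, g m := by
    have hcongr : ∏ m ∈ Finset.Ioc n N, g m
        = ∏ m ∈ Finset.Ioc n N, (1 - 4/(R n * 2^(m-n))) := by
      apply Finset.prod_congr rfl
      intro m hm
      rw [Finset.mem_Ioc] at hm
      simp only [hg]
      simp only [if_neg (by omega : ¬ m < n), if_neg (by omega : ¬ m = n)]
    rw [hcongr]
    have hwr := weier (Finset.Ioc n N) (fun m => 4/(R n * 2^(m-n)))
      (fun m hm => ((htm m (Finset.mem_Ioc.1 hm).1).1).le)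
      (fun m hm => le_trans (htm m (Finset.mem_Ioc.1 hm).1).2 (by norm_num))
    have hsum : ∑ m ∈ Finset.Ioc n N, 4/(R n * 2^(m-n)) ≤ 1/2 := by
      have e : ∀ m ∈ Finset.Ioc n N, 4/(R n * 2^(m-n)) = (4/R n) * ((1:ℝ)/2)^(m-n) := by
        intro m hm
        rw [div_pow, one_pow, div_mul_div_comm, mul_one]
      rw [Finset.sum_congr rfl e, ← Finset.mul_sum, geom_tail n N hN]
      have hp : (0:ℝ) ≤ (1/2:ℝ)^(N-n) := by positivity
      have h4 : 4/R n ≤ 1/2 := by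
        rw [div_le_iff₀ hRn0]
        linarith
      calc (4/R n)*(1-(1/2:ℝ)^(N-n)) ≤ (4/R n)*1 := by
            apply mul_le_mul_of_nonneg_left (by linarith) (by positivity)
      _ ≤ 1/2 := by linarith
    linarith
  have hsp2 : ∏ m ∈ Finset.Ioc 0 n, g m = (∏ m ∈ Finset.Ioc 0 (n-1), g m) * g n := by
    have h' := Finset.prod_Ioc_succ_top (Nat.zero_le (n-1)) g
    rw [show n - 1 + 1 = n from by omega] at h'
    exact h'
  have hone : ∏ m ∈ Finset.Ioc 0 (n-1), g m = 1 := by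
    apply Finset.prod_eq_one
    intro m hm
    rw [Finset.mem_Ioc] at hm
    simp only [hg]
    simp only [if_pos (show m < n by omega)]
  have hgn : g n = 3/8 := by
    simp only [hg]
    simp
  calc (3/16:ℝ) = (3/8) * (1/2) := by norm_num
  _ ≤ (3/8) * ∏ m ∈ Finset.Ioc n N, g m :=
      mul_le_mul_of_nonneg_left htail (by norm_num)
  _ = (∏ m ∈ Finset.Ioc 0 n, g m) * ∏ m ∈ Finset.Ioc n N, g m := by
      rw [hsp2, hone, hgn, one_mul]
  _ = ∏ m ∈ Finset.Ioc 0 N, g m := Finset.prod_Ioc_consecutive g (Nat.zero_le n) hN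
  _ ≤ _ := by rw [← hsplit] at *; exact hprod

end Rfacts

lemma amgm_div (x d ε : ℝ) (hx : 0 ≤ x) (hd : 0 < d) (hε : 0 < ε) :
    x / d ≤ ε/2 * x^2 + 1/(2*ε*d^2) := by
  rw [div_le_iff₀ hd, ← sub_nonneg]
  have expand : (ε/2*x^2 + 1/(2*ε*d^2))*d - x = ((ε*d*x - 1)^2)/(2*ε*d) := by
    field_simp
    ring
  rw [expand]
  positivity

set_option maxHeartbeats 1600000 in
/-- If |E(z)|² e^{-h(z)} ≍ n² dist²(z,Λ)/Rₙ³ on the annuli ||z| − Rₙ| ≤ Rₙ/n,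
then for every entire F ≢ 0 one has ∫ |F|²|E|² e^{-h} dm = ∞; in particular
F·E ∉ F_h. -/
theorem stmt_16 (R : ℕ → ℝ) (hR1 : 2 ≤ R 1) (hR : ∀ n ≥ 1, (R n) ^ 2 ≤ R (n + 1))
    (E : ℂ → ℂ)
    (hE : TendstoLocallyUniformly
      (fun N : ℕ => fun z : ℂ => ∏ n ∈ Icc 1 N, (1 - (z / (R n : ℂ)) ^ n)) E atTop)
    (h : ℂ → ℝ)
    (hcomp : ∃ c > (0:ℝ), ∃ C > (0:ℝ), ∀ n : ℕ, 1 ≤ n → ∀ z : ℂ,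
      |‖z‖ - R n| ≤ R n / n →
      c * n ^ 2 * (Metric.infDist z {w : ℂ | E w = 0}) ^ 2 / R n ^ 3
          ≤ ‖E z‖ ^ 2 * Real.exp (-h z) ∧
      ‖E z‖ ^ 2 * Real.exp (-h z)
          ≤ C * n ^ 2 * (Metric.infDist z {w : ℂ | E w = 0}) ^ 2 / R n ^ 3) :
    ∀ F : ℂ → ℂ, Differentiable ℂ F → (∃ z, F z ≠ 0) →
      ∫⁻ z : ℂ, ENNReal.ofReal
        (‖F z‖ ^ 2 * ‖E z‖ ^ 2 * Real.exp (-h z)) = ⊤ := by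
  obtain ⟨c, hc, C, hC, hcomp⟩ := hcomp
  intro F hF hFne
  obtain ⟨z₀, hz₀⟩ := hFne
  have R2 := R_ge_two hR1 hR
  have Rsq := R_sq_le hR1 hR
  have Rpow := R_pow hR1 hR
  have Rtail := R_tail hR1 hR
  have Rcube := R_cube hR1 hR
  set Λ : Set ℂ := {w : ℂ | E w = 0} with hΛ
  set ρ := ‖z₀‖ with hρdef
  set m₀ := ‖F z₀‖ with hm₀def
  have hm₀ : 0 < m₀ := norm_pos_iff.2 hz₀
  have hρ0 : 0 ≤ ρ := norm_nonneg z₀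
  have hptw : ∀ w : ℂ, Tendsto (fun N => ∏ m ∈ Icc 1 N, (1 - (w / (R m : ℂ)) ^ m))
      atTop (nhds (E w)) := by
    intro w
    exact (tendstoLocallyUniformlyOn_univ.2 hE).tendsto_at (Set.mem_univ w)
  have hER1 : (R 1 : ℂ) ∈ Λ := by
    have hzero : ∀ N : ℕ, 1 ≤ N → ∏ m ∈ Icc 1 N, (1 - ((R 1 : ℂ) / (R m : ℂ)) ^ m) = 0 := by
      intro N hN
      apply Finset.prod_eq_zero (Finset.mem_Icc.2 ⟨le_refl 1, hN⟩)
      have : (R 1 : ℂ) ≠ 0 := by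
        simp only [ne_eq, Complex.ofReal_eq_zero]
        intro h0
        rw [h0] at hR1
        norm_num at hR1
      rw [pow_one, div_self this, sub_self]
    have h1 : Tendsto (fun N : ℕ => (0:ℂ)) atTop (nhds (E (R 1 : ℂ))) := by
      apply (hptw (R 1 : ℂ)).congr'
      filter_upwards [eventually_ge_atTop 1] with N hN
      exact hzero N hN
    have h2 := tendsto_nhds_unique h1 tendsto_const_nhds
    simpa [hΛ] using h2
  have hΛne : Λ.Nonempty := ⟨(R 1 : ℂ), hER1⟩
  have hElow : ∀ n : ℕ, 3 ≤ n → ∀ w : ℂ, R n * (1 + 3/(8*(n:ℝ))) ≤ ‖w‖ →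
      ‖w‖ ≤ R n * (1 + 7/(8*(n:ℝ))) → (3/16 : ℝ) ≤ ‖E w‖ := by
    intro n hn w hw1 hw2
    have habs : Tendsto (fun N => ‖∏ m ∈ Icc 1 N, (1 - (w / (R m : ℂ)) ^ m)‖)
        atTop (nhds (‖E w‖)) :=
      (continuous_norm.tendsto (E w)).comp (hptw w)
    apply ge_of_tendsto habs
    filter_upwards [eventually_ge_atTop n] with N hN
    exact prod_lower R2 Rsq Rpow Rtail n hn w hw1 hw2 N hN
  have hdist : ∀ n : ℕ, 3 ≤ n → ∀ z : ℂ, R n * (1 + 1/(2*(n:ℝ))) < ‖z‖ →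
      ‖z‖ < R n * (1 + 3/(4*(n:ℝ))) → R n / (8*(n:ℝ)) ≤ Metric.infDist z Λ := by
    intro n hn z hz1 hz2
    have hn0 : (0:ℝ) < n := by positivity
    have hRn0 : (0:ℝ) < R n := by linarith [R2 n (by omega)]
    by_contra hlt
    push_neg at hlt
    obtain ⟨y, hyΛ, hdzy⟩ := (Metric.infDist_lt_iff hΛne).1 hlt
    rw [Complex.dist_eq] at hdzy
    have htr1 : ‖z‖ - ‖z - y‖ ≤ ‖y‖ := by
      have := norm_sub_norm_le z (z - y)
      simpa using this
    have htr2 : ‖y‖ ≤ ‖z‖ + ‖z - y‖ := by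
      calc ‖y‖ = ‖y - z + z‖ := by ring_nf
      _ ≤ ‖y - z‖ + ‖z‖ := norm_add_le _ _
      _ = ‖z‖ + ‖z - y‖ := by
          rw [← norm_sub_rev z y]; ring
    have harith1 : R n * (1 + 1/(2*(n:ℝ))) - R n/(8*(n:ℝ)) = R n * (1 + 3/(8*(n:ℝ))) := by
      field_simp
      ring
    have harith2 : R n * (1 + 3/(4*(n:ℝ))) + R n/(8*(n:ℝ)) = R n * (1 + 7/(8*(n:ℝ))) := by
      field_simp
      ring
    have hw1 : R n * (1 + 3/(8*(n:ℝ))) ≤ ‖y‖ := by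
      rw [← harith1]
      linarith
    have hw2 : ‖y‖ ≤ R n * (1 + 7/(8*(n:ℝ))) := by
      rw [← harith2]
      linarith
    have h316 := hElow n hn y hw1 hw2
    have hy0 : E y = 0 := hyΛ
    rw [hy0] at h316
    simp at h316
    linarith
  -- main quantitative estimate
  have main : ∀ n : ℕ, 3 ≤ n → 2*ρ + 2 ≤ R n →
      ENNReal.ofReal ((c/(64 * R n)) * (π * R n^2 * m₀^2/(64 * (n:ℝ)^2)))
        ≤ ∫⁻ z : ℂ, ENNReal.ofReal
          (‖F z‖ ^ 2 * ‖E z‖ ^ 2 * Real.exp (-h z)) := by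
    intro n hn3 hρn
    have hn0 : (0:ℝ) < n := by positivity
    have hn3' : (3:ℝ) ≤ (n:ℝ) := by exact_mod_cast hn3
    have hRn2 : (2:ℝ) ≤ R n := R2 n (by omega)
    have hRn0 : (0:ℝ) < R n := by linarith
    set a : ℝ := R n * (1 + 1/(2*(n:ℝ))) with hadef
    set b : ℝ := R n * (1 + 3/(4*(n:ℝ))) with hbdef
    have hfrac2 : 1/(2*(n:ℝ)) < 3/(4*(n:ℝ)) := by
      rw [div_lt_div_iff₀ (by positivity) (by positivity)]
      nlinarith
    have hfrac3 : 3/(4*(n:ℝ)) ≤ 1 := by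
      rw [div_le_one (by positivity)]
      linarith
    have hab : a < b := by
      rw [hadef, hbdef]
      nlinarith
    have hRa : R n < a := by
      rw [hadef]
      nlinarith [(by positivity : (0:ℝ) < 1/(2*(n:ℝ)))]
    have hb2 : b ≤ 2 * R n := by
      rw [hbdef]
      nlinarith
    have hρa : ρ < a := by linarith
    have ha0 : 0 < a := by linarith
    set S : Set ℂ := {z : ℂ | a < ‖z‖ ∧ ‖z‖ < b} with hSdef
    have hSopen : IsOpen S := by
      have hpre : S = (fun z : ℂ => ‖z‖) ⁻¹' (Set.Ioo a b) := rfl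
      rw [hpre]
      exact isOpen_Ioo.preimage continuous_norm
    have hSmeas : MeasurableSet S := hSopen.measurableSet
    have hSsub : S ⊆ Metric.closedBall 0 b := by
      intro z hz
      rw [Metric.mem_closedBall, Complex.dist_eq, sub_zero]
      exact le_of_lt hz.2
    have hSfin : volume S < ⊤ := by
      apply lt_of_le_of_lt (measure_mono hSsub)
      rw [Complex.volume_closedBall]
      exact ENNReal.mul_lt_top (ENNReal.pow_lt_top ENNReal.ofReal_lt_top) ENNReal.coe_lt_top
    -- pointwise weight bound on S
    have hweight : ∀ z ∈ S, c/(64*R n) ≤ ‖E z‖^2 * Real.exp (-h z) := by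
      intro z hz
      have hann : |‖z‖ - R n| ≤ R n / n := by
        rw [abs_le]
        have h1 : a - R n = R n/(2*(n:ℝ)) := by rw [hadef]; field_simp; ring
        have h2 : b - R n = 3*R n/(4*(n:ℝ)) := by rw [hbdef]; field_simp; ring
        constructor
        · have h3 : (0:ℝ) < R n / n := by positivity
          have h4 : R n ≤ ‖z‖ := le_trans hRa.le hz.1.le
          linarith
        · have h5 : ‖z‖ - R n ≤ 3*R n/(4*(n:ℝ)) := by
            have h6 := hz.2
            linarith [h2]
          have h6 : 3*R n/(4*(n:ℝ)) ≤ R n/(n:ℝ) := by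
            rw [div_le_div_iff₀ (by positivity) (by positivity)]
            nlinarith
          linarith
      have hcl := (hcomp n (by omega) z hann).1
      have hd := hdist n hn3 z hz.1 hz.2
      have hd0 : (0:ℝ) ≤ R n/(8*(n:ℝ)) := by positivity
      have hd2 : (R n/(8*(n:ℝ)))^2 ≤ (Metric.infDist z Λ)^2 :=
        pow_le_pow_left₀ hd0 hd 2
      have heq : c/(64*R n) = c * (n:ℝ)^2 * (R n/(8*(n:ℝ)))^2 / R n^3 := by
        field_simp
        ring
      rw [heq]
      refine le_trans ?_ hcl
      gcongr
    -- compact closed annulus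
    set Scl : Set ℂ := {z : ℂ | a ≤ ‖z‖ ∧ ‖z‖ ≤ b} with hScldef
    have hSclsub : Scl ⊆ Metric.closedBall 0 b := by
      intro z hz
      rw [Metric.mem_closedBall, Complex.dist_eq, sub_zero]
      exact hz.2
    have hSclclosed : IsClosed Scl := by
      have hpre : Scl = (fun z : ℂ => ‖z‖) ⁻¹' (Set.Icc a b) := rfl
      rw [hpre]
      exact isClosed_Icc.preimage continuous_norm
    have hSclcomp : IsCompact Scl :=
      (isCompact_closedBall (0:ℂ) b).of_isClosed_subset hSclclosed hSclsub
    have hSS : S ⊆ Scl := fun z hz => ⟨hz.1.le, hz.2.le⟩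
    have hFcont : Continuous fun z : ℂ => ‖F z‖^2 :=
      (continuous_norm.comp hF.continuous).pow 2
    have hIntF2 : IntegrableOn (fun z => ‖F z‖^2) S :=
      (hFcont.continuousOn.integrableOn_compact hSclcomp).mono_set hSS
    have hgcont : ContinuousOn (fun z : ℂ => (‖z‖ : ℂ)⁻¹ * (z * F z / (z - z₀))) Scl := by
      apply ContinuousOn.mul
      · apply ContinuousOn.inv₀
        · exact (Complex.continuous_ofReal.comp continuous_norm).continuousOn
        · intro z hz
          simp only [ne_eq, Complex.ofReal_eq_zero]
          have h1 : a ≤ ‖z‖ := hz.1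
          intro h0
          rw [h0] at h1
          linarith
      · apply ContinuousOn.div
        · exact (continuous_id.mul hF.continuous).continuousOn
        · exact (continuous_id.sub continuous_const).continuousOn
        · intro z hz
          apply sub_ne_zero.2
          intro hzz
          have h1 : a ≤ ‖z‖ := hz.1
          rw [hzz] at h1
          exact absurd h1 (not_le.2 hρa)
    have hIntg : IntegrableOn (fun z : ℂ => (‖z‖ : ℂ)⁻¹ * (z * F z / (z - z₀))) S :=
      (hgcont.integrableOn_compact hSclcomp).mono_set hSS
    set d : ℝ := a - ρ with hddef
    have hd0 : 0 < d := by rw [hddef]; linarith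
    have hdRn : R n / 2 ≤ d := by
      rw [hddef]
      have : ρ ≤ R n / 2 - 1 := by linarith
      linarith
    set ε : ℝ := 32*(n:ℝ)/(R n * m₀) with hεdef
    have hε0 : 0 < ε := by rw [hεdef]; positivity
    have hgnorm : ∀ z ∈ S, ‖(‖z‖ : ℂ)⁻¹ * (z * F z / (z - z₀))‖
        ≤ ε/2 * ‖F z‖^2 + 1/(2*ε*d^2) := by
      intro z hz
      have hza : (0:ℝ) < ‖z‖ := lt_trans ha0 hz.1
      have hzz₀ : d ≤ ‖z - z₀‖ := by
        have htr := norm_sub_norm_le z z₀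
        rw [hddef]
        linarith [hz.1]
      have hzzpos : (0:ℝ) < ‖z - z₀‖ := lt_of_lt_of_le hd0 hzz₀
      have hnorm : ‖(‖z‖ : ℂ)⁻¹ * (z * F z / (z - z₀))‖
          = ‖F z‖ / ‖z - z₀‖ := by
        simp only [norm_mul, norm_inv, Complex.norm_real, Real.norm_eq_abs, norm_div]
        rw [abs_of_pos hza]
        field_simp
      rw [hnorm]
      have step1 : ‖F z‖ / ‖z - z₀‖ ≤ ‖F z‖ / d := by
        gcongr
      exact le_trans step1 (amgm_div _ _ _ (norm_nonneg _) hd0 hε0)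
    have hIrhs : IntegrableOn (fun z => ε/2 * ‖F z‖^2 + 1/(2*ε*d^2)) S := by
      apply Integrable.add
      · exact hIntF2.const_mul _
      · exact integrableOn_const hSfin.ne
    have hbound := setIntegral_mono_on (hIntg.norm) hIrhs hSmeas hgnorm
    have hba0 : 0 ≤ 2*π*(b-a) := by
      have := pi_pos
      nlinarith
    have hlhs : ‖∫ z in S, (‖z‖ : ℂ)⁻¹ * (z * F z / (z - z₀))‖ = 2*π*(b-a)*m₀ := by
      rw [hSdef, annulus_cauchy F hF z₀ hρa hab, norm_smul, Real.norm_eq_abs,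
        abs_of_nonneg hba0, ← hm₀def]
    have h2 : ∫ z in S, (ε/2 * ‖F z‖^2 + 1/(2*ε*d^2))
        = ε/2 * (∫ z in S, ‖F z‖^2) + 1/(2*ε*d^2) * (volume S).toReal := by
      rw [integral_add (hIntF2.const_mul _) (integrableOn_const hSfin.ne),
        integral_const_mul, setIntegral_const]
      simp only [smul_eq_mul, measureReal_def]
      ring
    have hIneq : 2*π*(b-a)*m₀ ≤ ε/2 * (∫ z in S, ‖F z‖^2)
        + 1/(2*ε*d^2) * (volume S).toReal := by
      calc 2*π*(b-a)*m₀ = ‖∫ z in S, (‖z‖ : ℂ)⁻¹ * (z * F z / (z - z₀))‖ := hlhs.symm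
      _ ≤ ∫ z in S, ‖(‖z‖ : ℂ)⁻¹ * (z * F z / (z - z₀))‖ :=
          norm_integral_le_integral_norm _
      _ ≤ ∫ z in S, (ε/2 * ‖F z‖^2 + 1/(2*ε*d^2)) := hbound
      _ = _ := h2
    have hvol : (volume S).toReal ≤ π * b^2 := by
      have h1 : volume S ≤ ENNReal.ofReal b ^2 * NNReal.pi := by
        rw [← Complex.volume_closedBall 0 b]
        exact measure_mono hSsub
      have hne : (ENNReal.ofReal b ^2 * (NNReal.pi : ENNReal)) ≠ ⊤ :=
        (ENNReal.mul_lt_top (ENNReal.pow_lt_top ENNReal.ofReal_lt_top) ENNReal.coe_lt_top).ne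
      calc (volume S).toReal ≤ (ENNReal.ofReal b ^2 * (NNReal.pi : ENNReal)).toReal :=
            ENNReal.toReal_mono hne h1
      _ = b^2 * π := by
          rw [ENNReal.toReal_mul, ENNReal.toReal_pow, ENNReal.toReal_ofReal (by linarith : (0:ℝ) ≤ b),
            ENNReal.coe_toReal, NNReal.coe_real_pi]
      _ = π * b^2 := by ring
    have hIF : π * R n^2 * m₀^2/(64*(n:ℝ)^2) ≤ ∫ z in S, ‖F z‖^2 := by
      have hba : b - a = R n/(4*(n:ℝ)) := by rw [hadef, hbdef]; field_simp; ring
      have hterm2 : 1/(2*ε*d^2) * (volume S).toReal ≤ π*R n*m₀/(4*(n:ℝ)) := by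
        have hbb : b^2 ≤ 4*R n^2 := by nlinarith
        have hvol2 : (volume S).toReal ≤ 4*π*R n^2 := by nlinarith [pi_pos]
        have hdd : (R n/2)^2 ≤ d^2 := pow_le_pow_left₀ (by positivity) hdRn 2
        have hfrac : 1/(2*ε*d^2) ≤ 1/(2*ε*(R n/2)^2) := by
          apply one_div_le_one_div_of_le (by positivity)
          have := mul_le_mul_of_nonneg_left hdd (by positivity : (0:ℝ) ≤ 2*ε)
          calc 2*ε*(R n/2)^2 = 2*ε*((R n/2)^2) := by ring
          _ ≤ 2*ε*(d^2) := this
          _ = 2*ε*d^2 := by ring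
        calc 1/(2*ε*d^2) * (volume S).toReal ≤ 1/(2*ε*(R n/2)^2) * (4*π*R n^2) :=
            mul_le_mul hfrac hvol2 ENNReal.toReal_nonneg (by positivity)
        _ = π*R n*m₀/(4*(n:ℝ)) := by
            rw [hεdef]
            field_simp
            ring
      have hterm1 : 2*π*(b-a)*m₀ = π*R n*m₀/(2*(n:ℝ)) := by
        rw [hba]
        field_simp
        ring
      have hkey : π*R n*m₀/(4*(n:ℝ)) ≤ ε/2 * (∫ z in S, ‖F z‖^2) := by
        have h4 : π*R n*m₀/(2*(n:ℝ)) - π*R n*m₀/(4*(n:ℝ)) = π*R n*m₀/(4*(n:ℝ)) := by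
          field_simp
          ring
        rw [hterm1] at hIneq
        linarith
      have hfin : π * R n^2 * m₀^2/(64*(n:ℝ)^2) = (2/ε) * (π*R n*m₀/(4*(n:ℝ))) := by
        rw [hεdef]
        field_simp
        ring
      rw [hfin]
      calc (2/ε) * (π*R n*m₀/(4*(n:ℝ))) ≤ (2/ε) * (ε/2 * (∫ z in S, ‖F z‖^2)) :=
          mul_le_mul_of_nonneg_left hkey (by positivity)
      _ = ∫ z in S, ‖F z‖^2 := by
          field_simp
    have hκ0 : (0:ℝ) ≤ c/(64*R n) := by positivity
    calc ENNReal.ofReal ((c/(64 * R n)) * (π * R n^2 * m₀^2/(64 * (n:ℝ)^2)))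
        ≤ ENNReal.ofReal ((c/(64*R n)) * ∫ z in S, ‖F z‖^2) :=
          ENNReal.ofReal_le_ofReal (mul_le_mul_of_nonneg_left hIF hκ0)
    _ = ENNReal.ofReal (∫ z in S, (c/(64*R n)) * ‖F z‖^2) := by
          rw [integral_const_mul]
    _ = ∫⁻ z in S, ENNReal.ofReal ((c/(64*R n)) * ‖F z‖^2) :=
          ofReal_integral_eq_lintegral_ofReal (hIntF2.const_mul _)
            (Eventually.of_forall fun z => by positivity)
    _ ≤ ∫⁻ z in S, ENNReal.ofReal
          (‖F z‖ ^ 2 * ‖E z‖ ^ 2 * Real.exp (-h z)) := by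
          apply setLIntegral_mono' hSmeas
          intro z hz
          apply ENNReal.ofReal_le_ofReal
          have hw := hweight z hz
          calc (c/(64*R n)) * ‖F z‖^2
              = ‖F z‖^2 * (c/(64*R n)) := by ring
          _ ≤ ‖F z‖^2 * (‖E z‖^2 * Real.exp (-h z)) :=
              mul_le_mul_of_nonneg_left hw (by positivity)
          _ = _ := by ring
    _ ≤ ∫⁻ z : ℂ, ENNReal.ofReal
          (‖F z‖ ^ 2 * ‖E z‖ ^ 2 * Real.exp (-h z)) :=
        setLIntegral_le_lintegral S _
  -- conclusion
  by_contra hfin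
  set Lr : ℝ := (∫⁻ z : ℂ, ENNReal.ofReal
      (‖F z‖ ^ 2 * ‖E z‖ ^ 2 * Real.exp (-h z))).toReal with hLrdef
  obtain ⟨n, hn⟩ := exists_nat_ge (max (max 10 (2*ρ+2)) (4096*(Lr+1)/(c*π*m₀^2)))
  have hmax1 : (10:ℝ) ≤ (n:ℝ) := le_trans (le_trans (le_max_left _ _) (le_max_left _ _)) hn
  have hn10 : 10 ≤ n := by exact_mod_cast hmax1
  have hmax2 : 2*ρ+2 ≤ (n:ℝ) := le_trans (le_trans (le_max_right _ _) (le_max_left _ _)) hn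
  have hmax3 : 4096*(Lr+1)/(c*π*m₀^2) ≤ (n:ℝ) := le_trans (le_max_right _ _) hn
  have hcube := Rcube n hn10
  have hn1 : (1:ℝ) ≤ (n:ℝ) := by linarith
  have hsq1 : (1:ℝ) ≤ (n:ℝ)^2 := by nlinarith
  have hnR : (n:ℝ) ≤ R n := by nlinarith [mul_le_mul_of_nonneg_left hsq1 (by linarith : (0:ℝ) ≤ (n:ℝ))]
  have hρn : 2*ρ+2 ≤ R n := le_trans hmax2 hnR
  have hM := main n (by omega) hρn
  have hle := (ENNReal.ofReal_le_iff_le_toReal hfin).1 hM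
  rw [← hLrdef] at hle
  have hRn0 : (0:ℝ) < R n := by linarith [R2 n (by omega)]
  have hn0 : (0:ℝ) < (n:ℝ) := by linarith
  have hx : c*π*m₀^2*(n:ℝ)/4096 ≤ c/(64*R n) * (π*R n^2*m₀^2/(64*(n:ℝ)^2)) := by
    have he : c/(64*R n) * (π*R n^2*m₀^2/(64*(n:ℝ)^2)) = c*π*m₀^2*R n/(4096*(n:ℝ)^2) := by
      field_simp
      ring
    rw [he, div_le_div_iff₀ (by norm_num) (by positivity)]
    have hcpm : (0:ℝ) ≤ c*π*m₀^2 := by positivity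
    nlinarith [mul_le_mul_of_nonneg_left hcube hcpm]
  have hy : Lr + 1 ≤ c*π*m₀^2*(n:ℝ)/4096 := by
    have h0 : (0:ℝ) < c*π*m₀^2 := by positivity
    rw [div_le_iff₀ h0] at hmax3
    rw [le_div_iff₀ (by norm_num : (0:ℝ) < 4096)]
    nlinarith
  linarith
end

section
/- Let t_k, s_k be sequences with t_k ∈ ℕ, s_k ≥ 1, t_k > t_{k−1} + 1, and s_k > 2 t_k s_{k−1} for k > 1. Define p_n = log Σ_{k≥1} e^{(n − t_k) s_k}. Then p_n = max_{k≥1} (n − t_k)s_k + O(1) uniformly in n ≥ 1, and for t_k + 1 ≤ n ≤ t_{k+1}, p_n = (n − t_k) s_k + O(1); in particular the sequence {p_n} is affine (up to O(1)) on each block [t_k + 1, t_{k+1}]. -/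
open Real


theorem stmt17_key (t : ℕ → ℕ) (s : ℕ → ℝ)
    (hs1 : ∀ k ≥ 1, 1 ≤ s k)
    (ht : ∀ k ≥ 2, t (k - 1) + 1 < t k)
    (hlac : ∀ k ≥ 2, 2 * t k * s (k - 1) < s k)
    (n : ℕ) (hn : 1 ≤ n) :
    ∃ m : ℕ, 1 ≤ m ∧
      (∀ j, 1 ≤ j → ((n:ℝ) - t j) * s j ≤ ((n:ℝ) - t m) * s m - |(j:ℝ) - (m:ℝ)|) ∧
      (∀ k, 1 ≤ k → t k + 1 ≤ n → n ≤ t (k + 1) → k = m) := by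
  classical
  -- basic consequences
  have hts : ∀ j, 1 ≤ j → t j + 2 ≤ t (j + 1) := by
    intro j hj
    have h := ht (j + 1) (by omega)
    simp at h; omega
  have htmono : ∀ i j, 1 ≤ i → i ≤ j → t i + 2 * (j - i) ≤ t j := by
    intro i j hi hij
    induction j, hij using Nat.le_induction with
    | base => omega
    | succ j hij ih =>
      have := hts j (le_trans hi hij)
      omega
  have ht2 : ∀ j, 2 ≤ j → 2 ≤ t j := by
    intro j hj
    have := htmono 1 j (by omega) (by omega)
    omega
  have htmono' : ∀ i j, 1 ≤ i → i ≤ j → t i ≤ t j := by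
    intro i j hi hij; have := htmono i j hi hij; omega
  have hs4 : ∀ j, 1 ≤ j → 4 * s j ≤ s (j + 1) := by
    intro j hj
    have h1 := hlac (j + 1) (by omega)
    simp only [Nat.add_sub_cancel] at h1
    have h2 : (2 : ℕ) ≤ t (j + 1) := ht2 _ (by omega)
    have h3 : (1 : ℝ) ≤ s j := hs1 j hj
    have h2' : (2 : ℝ) ≤ (t (j + 1) : ℝ) := by exact_mod_cast h2
    have h1' : 2 * (t (j + 1) : ℝ) * s j < s (j + 1) := by exact_mod_cast h1
    nlinarith
  have hsmono : ∀ i j, 1 ≤ i → i ≤ j → s i ≤ s j := by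
    intro i j hi hij
    induction j, hij using Nat.le_induction with
    | base => exact le_rfl
    | succ j hij ih =>
      have h1 := hs4 j (le_trans hi hij)
      have h2 : (1 : ℝ) ≤ s i := hs1 i hi
      linarith
  have hsm4 : ∀ k, (4 : ℝ) ^ k ≤ s (k + 1) := by
    intro k
    induction k with
    | zero => simpa using hs1 1 le_rfl
    | succ k ih =>
      have := hs4 (k + 1) (by omega)
      calc (4:ℝ) ^ (k+1) = 4 * 4 ^ k := by ring
        _ ≤ 4 * s (k+1) := by linarith
        _ ≤ s (k+2) := this

  have hspos : ∀ j, 1 ≤ j → (0:ℝ) < s j := fun j hj => lt_of_lt_of_le one_pos (hs1 j hj)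
  set b : ℕ → ℝ := fun j => ((n : ℝ) - t j) * s j with hbdef
  -- tail decay lemma
  have hA : ∀ j, 1 ≤ j → (n : ℕ) ≤ t j → b (j + 1) ≤ b j - 2 := by
    intro j hj hnt
    have h1 : ((n:ℝ)) - t (j + 1) ≤ (n:ℝ) - t j - 2 := by
      have h : ((t j : ℝ)) + 2 ≤ t (j + 1) := by exact_mod_cast hts j hj
      linarith
    have h0 : ((n:ℝ)) - t j ≤ 0 := by
      have : (n:ℝ) ≤ t j := by exact_mod_cast hnt
      linarith
    have hsj : (1:ℝ) ≤ s j := hs1 j hj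
    have hss : s j ≤ s (j + 1) := hsmono j (j+1) hj (by omega)
    have e1 : ((n:ℝ) - t (j+1)) * s (j+1) ≤ ((n:ℝ) - t (j+1)) * s j :=
      mul_le_mul_of_nonpos_left hss (by linarith)
    have e2 : ((n:ℝ) - t (j+1)) * s j ≤ ((n:ℝ) - t j - 2) * s j :=
      mul_le_mul_of_nonneg_right h1 (by linarith)
    have : ((n:ℝ) - t j - 2) * s j ≤ ((n:ℝ) - t j) * s j - 2 := by nlinarith
    simp only [hbdef]; linarith
  -- the maximizer
  by_cases hcase : t 1 < n
  case pos =>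
    set m : ℕ := Nat.findGreatest (fun j => t j < n) n with hmdef
    have hm1 : 1 ≤ m := Nat.le_findGreatest hn hcase
    have htm : t m < n := by
      have h : t (Nat.findGreatest (fun j => t j < n) n) < n :=
        Nat.findGreatest_spec (P := fun j => t j < n) (m := 1) (n := n) hn hcase
      rwa [← hmdef] at h
    have hgt : ∀ j, m < j → n ≤ t j := by
      intro j hj
      by_cases hjn : j ≤ n
      · have := Nat.findGreatest_is_greatest (P := fun j => t j < n) hj hjn
        omega
      · have := htmono 1 j (by omega) (by omega)
        omega
    -- upward bound
    have hup : ∀ j, m < j → b j ≤ b m - ((j:ℝ) - m) := by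
      intro j hj
      induction j, hj using Nat.le_induction with
      | base =>
        have h1 : b (m+1) ≤ 0 := by
          have hnt : (n:ℝ) ≤ t (m+1) := by exact_mod_cast hgt (m+1) (by omega)
          have := hspos (m+1) (by omega)
          simp only [hbdef]
          nlinarith
        have h2 : (1:ℝ) ≤ b m := by
          have hr : (1:ℝ) ≤ (n:ℝ) - t m := by
            have h : ((t m : ℝ)) + 1 ≤ (n:ℝ) := by exact_mod_cast htm
            linarith
          have := hs1 m hm1
          simp only [hbdef]
          nlinarith
        push_cast; linarith
      | succ j hj ih =>
        have hd := hA j (by omega) (hgt j (by omega))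
        push_cast at ih ⊢
        linarith
    -- downward bound
    have hdown : ∀ j, 1 ≤ j → j < m → b j ≤ b m - ((m:ℝ) - j) := by
      intro j hj hjm
      have hm2 : 2 ≤ m := by omega
      have hT2 : (2:ℝ) ≤ (t m : ℝ) := by exact_mod_cast ht2 m hm2
      have hr1 : (1:ℝ) ≤ (n:ℝ) - t m := by
        have : t m + 1 ≤ n := htm
        have : (t m : ℝ) + 1 ≤ (n:ℝ) := by exact_mod_cast this
        linarith
      have hS1 : (1:ℝ) ≤ s (m-1) := hs1 (m-1) (by omega)
      have hsj1 : (1:ℝ) ≤ s j := hs1 j hj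
      have hsjS : s j ≤ s (m-1) := hsmono j (m-1) hj (by omega)
      have hTS : 2 * (t m : ℝ) * s (m-1) ≤ s m := le_of_lt (hlac m hm2)
      have hsm : (4:ℝ) ^ (m-1) ≤ s m := by
        have := hsm4 (m-1)
        have hmm : m - 1 + 1 = m := by omega
        rwa [hmm] at this
      have hpow : 4 * ((m:ℝ) - 1) ≤ (4:ℝ) ^ (m-1) := by
        have hnat : ∀ q : ℕ, 4 * (q + 1) ≤ 4 ^ (q + 1) := by
          intro q
          induction q with
          | zero => norm_num
          | succ q ih =>
            have : (4:ℕ) ^ (q+2) = 4 * 4 ^ (q+1) := by ring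
            calc 4 * (q + 2) ≤ 4 * (4 * (q+1)) := by omega
              _ ≤ 4 * 4 ^ (q+1) := by omega
              _ = 4 ^ (q+2) := this.symm
        have h2 := hnat (m - 2)
        have hmm : m - 2 + 1 = m - 1 := by omega
        rw [hmm] at h2
        have h2' : (4:ℝ) * ((m:ℝ) - 1) ≤ (4:ℝ) ^ (m-1) := by
          have : ((4 * (m - 1) : ℕ) : ℝ) ≤ ((4 ^ (m-1) : ℕ) : ℝ) := by exact_mod_cast h2
          push_cast at this
          have hc : ((m - 1 : ℕ) : ℝ) = (m:ℝ) - 1 := by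
            have : (1:ℕ) ≤ m := hm1
            push_cast [this]; ring
          rw [hc] at this
          exact this
        exact h2'
      -- main chain
      have hmj : (m:ℝ) - j ≤ (m:ℝ) - 1 := by
        have : (1:ℝ) ≤ (j:ℝ) := by exact_mod_cast hj
        linarith
      have hmj4 : (m:ℝ) - j ≤ s m / 4 := by
        have : 4 * ((m:ℝ) - j) ≤ s m := by linarith
        linarith
      have hbj : b j ≤ ((n:ℝ)) * s (m-1) := by
        have h1 : ((n:ℝ) - t j) * s j ≤ (n:ℝ) * s j := by
          have : (0:ℝ) ≤ (t j : ℝ) := by positivity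
          nlinarith
        have h2 : (n:ℝ) * s j ≤ (n:ℝ) * s (m-1) := by
          have : (0:ℝ) ≤ (n:ℝ) := by positivity
          nlinarith
        simp only [hbdef]; linarith
      have hkey : (n:ℝ) * s (m-1) ≤ (((n:ℝ) - t m) - 1/4) * s m := by
        set r : ℝ := (n:ℝ) - t m with hrdef
        set T : ℝ := (t m : ℝ) with hTdef
        have hnTr : (n:ℝ) = T + r := by rw [hrdef, hTdef]; ring
        have step1 : (T + r) * s (m-1) ≤ (r - 1/4) * (2 * T * s (m-1)) := by
          nlinarith [mul_nonneg (sub_nonneg.2 hT2) (by linarith : (0:ℝ) ≤ r - 1), hS1, hT2, hr1]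
        have step2 : (r - 1/4) * (2 * T * s (m-1)) ≤ (r - 1/4) * s m := by
          apply mul_le_mul_of_nonneg_left _ (by linarith)
          simpa [hTdef] using hTS
        rw [hnTr]
        linarith
      have : b m = ((n:ℝ) - t m) * s m := rfl
      have hfin : b j ≤ b m - s m / 4 := by
        have : (((n:ℝ) - t m) - 1/4) * s m = b m - s m / 4 := by simp only [hbdef]; ring
        linarith [hbj, hkey, this.symm.le]
      linarith
    refine ⟨m, hm1, ?_, ?_⟩
    · intro j hj
      rcases lt_trichotomy j m with h | h | h
      · have := hdown j hj h
        have habs : |(j:ℝ) - m| = (m:ℝ) - j := by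
          rw [abs_sub_comm]
          apply abs_of_nonneg
          have : (j:ℝ) ≤ (m:ℝ) := by exact_mod_cast h.le
          linarith
        rw [habs]; exact this
      · subst h; simp
      · have := hup j h
        have habs : |(j:ℝ) - m| = (j:ℝ) - m := by
          apply abs_of_nonneg
          have : (m:ℝ) ≤ (j:ℝ) := by exact_mod_cast h.le
          linarith
        rw [habs]; exact this
    · intro k hk h1 h2
      rcases lt_trichotomy k m with h | h | h
      · have hkm : k + 1 ≤ m := h
        have := htmono' (k+1) m (by omega) hkm
        omega
      · exact h
      · have := hgt k h
        omega
  case neg =>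
    push_neg at hcase
    have hall : ∀ j, 1 ≤ j → (n:ℕ) ≤ t j := fun j hj =>
      le_trans hcase (htmono' 1 j le_rfl hj)
    have hup : ∀ j, 1 < j → b j ≤ b 1 - ((j:ℝ) - 1) := by
      intro j hj
      induction j, hj using Nat.le_induction with
      | base =>
        have := hA 1 le_rfl (hall 1 le_rfl)
        push_cast
        linarith
      | succ j hj ih =>
        have hd := hA j (by omega) (hall j (by omega))
        push_cast at ih ⊢
        linarith
    refine ⟨1, le_rfl, ?_, ?_⟩
    · intro j hj
      rcases eq_or_lt_of_le hj with h | h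
      · rw [← h]
        simp
      · have := hup j h
        have habs : |(j:ℝ) - ((1:ℕ):ℝ)| = (j:ℝ) - 1 := by
          rw [Nat.cast_one]
          apply abs_of_nonneg
          have : (1:ℝ) ≤ (j:ℝ) := by exact_mod_cast hj
          linarith
        rw [habs]
        exact this
    · intro k hk h1 h2
      have := hall k hk
      omega


set_option maxHeartbeats 1000000 in

theorem stmt17_analytic (b : ℕ → ℝ) (m : ℕ) (hm1 : 1 ≤ m)
    (hP2 : ∀ j, 1 ≤ j → b j ≤ b m - |(j:ℝ) - (m:ℝ)|) :
    b m ≤ Real.log (∑' k : ℕ, Real.exp (b (k+1))) ∧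
    Real.log (∑' k : ℕ, Real.exp (b (k+1))) ≤ b m + Real.log 4 ∧
    (⨆ k : ℕ, b (k+1)) = b m := by
  have h2e : (2:ℝ) ≤ rexp 1 := by nlinarith [Real.add_one_le_exp 1]
  set r : ℝ := rexp (-1) with hrdef
  have hr0 : 0 ≤ r := (Real.exp_pos _).le
  have hrhalf : r ≤ 1/2 := by
    rw [hrdef, Real.exp_neg, show (1:ℝ)/2 = 2⁻¹ by norm_num]
    exact inv_anti₀ (by norm_num) h2e
  have hr1 : r < 1 := by linarith
  have hinv : (1 - r)⁻¹ ≤ 2 := by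
    have h := inv_anti₀ (by linarith : (0:ℝ) < 1/2) (by linarith : 1/2 ≤ 1 - r)
    norm_num at h
    linarith
  have hgsum : Summable fun i : ℕ => r ^ i := summable_geometric_of_lt_one hr0 hr1
  have htg : ∑' i : ℕ, r ^ i = (1 - r)⁻¹ := tsum_geometric_of_lt_one hr0 hr1
  have hble : ∀ k : ℕ, b (k+1) ≤ b m := by
    intro k
    have h := hP2 (k+1) (by omega)
    have := abs_nonneg (((k+1:ℕ):ℝ) - m)
    linarith
  have hexpow : ∀ (q : ℕ) (x : ℝ), rexp (x + (q:ℝ) * (-1)) = rexp x * r ^ q := by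
    intro q x
    rw [Real.exp_add, Real.exp_nat_mul]
  have hbound : ∀ k : ℕ, rexp (b (k+1)) ≤ rexp (b m + m) * r ^ k := by
    intro k
    have h := hP2 (k+1) (by omega)
    have habs := le_abs_self (((k+1:ℕ):ℝ) - m)
    have hc : ((k+1:ℕ):ℝ) = (k:ℝ) + 1 := by push_cast; ring
    have h2 : b (k+1) ≤ b m + m + (k:ℝ) * (-1) := by
      rw [hc] at h habs; linarith
    calc rexp (b (k+1)) ≤ rexp (b m + (m:ℝ) + (k:ℝ)*(-1)) := Real.exp_le_exp.2 h2
      _ = rexp (b m + m) * r ^ k := hexpow k (b m + m)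
  have hsum : Summable fun k : ℕ => rexp (b (k+1)) :=
    Summable.of_nonneg_of_le (fun k => (Real.exp_pos _).le) hbound (hgsum.mul_left _)
  have hmm : m - 1 + 1 = m := by omega
  have hSlower : rexp (b m) ≤ ∑' k : ℕ, rexp (b (k+1)) := by
    have h := Summable.le_tsum hsum (m - 1) (fun j _ => (Real.exp_pos _).le)
    rwa [hmm] at h
  have hSpos : 0 < ∑' k : ℕ, rexp (b (k+1)) := lt_of_lt_of_le (Real.exp_pos _) hSlower
  -- head bound
  have hhead : ∑ i ∈ Finset.range m, rexp (b (i+1)) ≤ 2 * rexp (b m) := by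
    have h1 : ∀ i ∈ Finset.range m, rexp (b (i+1)) ≤ rexp (b m) * r ^ (m - 1 - i) := by
      intro i hi
      have him : i < m := Finset.mem_range.1 hi
      have h := hP2 (i+1) (by omega)
      have habs : (m:ℝ) - ((i+1:ℕ):ℝ) ≤ |((i+1:ℕ):ℝ) - m| := by
        have := neg_abs_le (((i+1:ℕ):ℝ) - m); linarith
      have hnn : (m - 1 - i) + (i + 1) = m := by omega
      have hcast : ((m - 1 - i : ℕ):ℝ) + ((i:ℝ) + 1) = (m:ℝ) := by
        have := congrArg (fun q : ℕ => (q:ℝ)) hnn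
        push_cast at this
        linarith
      have h2 : b (i+1) ≤ b m + ((m - 1 - i : ℕ):ℝ) * (-1) := by
        have hc : ((i+1:ℕ):ℝ) = (i:ℝ) + 1 := by push_cast; ring
        rw [hc] at h habs
        nlinarith
      calc rexp (b (i+1)) ≤ rexp (b m + ((m-1-i:ℕ):ℝ)*(-1)) := Real.exp_le_exp.2 h2
        _ = rexp (b m) * r ^ (m-1-i) := hexpow _ _
    calc ∑ i ∈ Finset.range m, rexp (b (i+1))
        ≤ ∑ i ∈ Finset.range m, rexp (b m) * r ^ (m - 1 - i) := Finset.sum_le_sum h1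
      _ = rexp (b m) * ∑ i ∈ Finset.range m, r ^ (m - 1 - i) := by rw [Finset.mul_sum]
      _ = rexp (b m) * ∑ i ∈ Finset.range m, r ^ i := by
          rw [Finset.sum_range_reflect (fun i => r ^ i) m]
      _ ≤ rexp (b m) * (1 - r)⁻¹ := by
          apply mul_le_mul_of_nonneg_left _ (Real.exp_pos _).le
          rw [← htg]
          exact Summable.sum_le_tsum _ (fun i _ => pow_nonneg hr0 i) hgsum
      _ ≤ 2 * rexp (b m) := by nlinarith [Real.exp_pos (b m)]
  -- tail bound
  have htail : ∑' i : ℕ, rexp (b ((i + m) + 1)) ≤ 2 * rexp (b m) := by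
    have h1 : ∀ i : ℕ, rexp (b ((i + m) + 1)) ≤ rexp (b m) * r ^ i := by
      intro i
      have h := hP2 (i + m + 1) (by omega)
      have habs : ((i + m + 1 : ℕ):ℝ) - (m:ℝ) ≤ |((i + m + 1:ℕ):ℝ) - m| :=
        le_abs_self _
      have hc : ((i + m + 1:ℕ):ℝ) = (i:ℝ) + (m:ℝ) + 1 := by push_cast; ring
      have h2 : b (i + m + 1) ≤ b m + (i:ℝ) * (-1) := by
        rw [hc] at h habs; linarith
      calc rexp (b (i + m + 1)) ≤ rexp (b m + (i:ℝ)*(-1)) := Real.exp_le_exp.2 h2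
        _ = rexp (b m) * r ^ i := hexpow _ _
    have hsumtail : Summable fun i : ℕ => rexp (b ((i + m) + 1)) :=
      (summable_nat_add_iff m).2 hsum
    calc ∑' i : ℕ, rexp (b ((i + m) + 1))
        ≤ ∑' i : ℕ, rexp (b m) * r ^ i :=
          Summable.tsum_le_tsum h1 hsumtail (hgsum.mul_left _)
      _ = rexp (b m) * (1 - r)⁻¹ := by rw [tsum_mul_left, htg]
      _ ≤ 2 * rexp (b m) := by nlinarith [Real.exp_pos (b m)]
  have hsplit := Summable.sum_add_tsum_nat_add (f := fun k : ℕ => rexp (b (k+1))) m hsum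
  have hStot : ∑' k : ℕ, rexp (b (k+1)) ≤ 4 * rexp (b m) := by
    rw [← hsplit]
    have := htail
    linarith
  refine ⟨(Real.le_log_iff_exp_le hSpos).2 hSlower, ?_, ?_⟩
  · have h := Real.log_le_log hSpos hStot
    rwa [Real.log_mul (by norm_num) (Real.exp_ne_zero _), Real.log_exp, add_comm] at h
  · have hbdd : BddAbove (Set.range fun k : ℕ => b (k+1)) := by
      refine ⟨b m, ?_⟩
      rintro x ⟨k, rfl⟩
      exact hble k
    refine le_antisymm (ciSup_le hble) ?_
    have h := le_ciSup hbdd (m - 1)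
    rwa [hmm] at h


/-- Under the lacunarity conditions on (t_k, s_k), the log-moment sequence
p_n = log Σ_k e^{(n−t_k)s_k} equals max_k (n−t_k)s_k up to O(1), and on each
block t_k + 1 ≤ n ≤ t_{k+1} it equals (n−t_k)s_k up to O(1). -/
theorem stmt_17 (t : ℕ → ℕ) (s : ℕ → ℝ)
    (hs1 : ∀ k ≥ 1, 1 ≤ s k)
    (ht : ∀ k ≥ 2, t (k - 1) + 1 < t k)
    (hlac : ∀ k ≥ 2, 2 * t k * s (k - 1) < s k) :
    ∃ C : ℝ, ∀ n : ℕ, 1 ≤ n →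
      let p : ℝ := Real.log (∑' k : ℕ, Real.exp (((n : ℝ) - t (k + 1)) * s (k + 1)))
      |p - ⨆ k : ℕ, ((n : ℝ) - t (k + 1)) * s (k + 1)| ≤ C ∧
      ∀ k : ℕ, 1 ≤ k → t k + 1 ≤ n → n ≤ t (k + 1) →
        |p - ((n : ℝ) - t k) * s k| ≤ C := by
  refine ⟨Real.log 4, ?_⟩
  intro n hn
  obtain ⟨m, hm1, hP2, hP3⟩ := stmt17_key t s hs1 ht hlac n hn
  obtain ⟨hlo, hup, hsup⟩ :
      ((n:ℝ) - t m) * s m ≤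
        Real.log (∑' k : ℕ, Real.exp (((n:ℝ) - t (k+1)) * s (k+1))) ∧
      Real.log (∑' k : ℕ, Real.exp (((n:ℝ) - t (k+1)) * s (k+1))) ≤
        ((n:ℝ) - t m) * s m + Real.log 4 ∧
      (⨆ k : ℕ, ((n:ℝ) - t (k+1)) * s (k+1)) = ((n:ℝ) - t m) * s m :=
    stmt17_analytic (fun j => ((n:ℝ) - t j) * s j) m hm1 hP2
  intro p
  have hp : p = Real.log (∑' k : ℕ, Real.exp (((n:ℝ) - t (k+1)) * s (k+1))) := rfl
  have hlog4 : 0 ≤ Real.log 4 := Real.log_nonneg (by norm_num)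
  constructor
  · rw [hp, hsup, abs_le]
    constructor <;> linarith
  · intro k hk h1 h2
    rw [hP3 k hk h1 h2, hp, abs_le]
    constructor <;> linarith
end

section
/- Let Λ ⊂ ℂ and ρ > 0 with dist(λ, Λ∖{λ}) ≥ βρ for all λ ∈ Λ in a disc D' of radius (N+1)ρ. Suppose E is entire with simple zeros on Λ, and for each λ ∈ Λ ∩ D, ∫_ℂ |E(z)|²/|z−λ|² e^{−h(z)} dm(z) ≤ (C/ρ²) ∫_{|z−λ|<ρ} |E(z)|² e^{−h(z)} dm(z). Then ∫_ℂ (Σ_{λ ∈ Λ ∩ D} 1/|z−λ|²) |E(z)|² e^{−h(z)} dm(z) ≤ (C'/ρ²) ∫_{D'} |E(z)|² e^{−h(z)} dm(z), where D is the disc of radius Nρ concentric with D', and C' depends only on C and β. -/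
open Real MeasureTheory ENNReal

/-- Packing lemma: a `2r`-separated finite set inside `ball c R` in `ℂ`
has at most `(R+r)²/r²` points. -/
lemma packing_card_le (r R : ℝ) (hr : 0 < r) (hR : 0 ≤ R) (c : ℂ) (T : Finset ℂ)
    (hsub : ∀ x ∈ T, dist x c < R)
    (hsep : ∀ x ∈ T, ∀ y ∈ T, x ≠ y → 2 * r ≤ dist x y) :
    (T.card : ℝ) ≤ (R + r) ^ 2 / r ^ 2 := by
  have hdisj : (T : Set ℂ).PairwiseDisjoint (fun x => Metric.ball x r) := by
    intro x hx y hy hxy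
    exact Metric.ball_disjoint_ball (by linarith [hsep x hx y hy hxy])
  have hmeas : volume (⋃ x ∈ T, Metric.ball x r) = ∑ x ∈ T, volume (Metric.ball x r) :=
    measure_biUnion_finset hdisj (fun x _ => measurableSet_ball)
  have hsub2 : (⋃ x ∈ T, Metric.ball x r) ⊆ Metric.ball c (R + r) := by
    intro z hz
    simp only [Set.mem_iUnion] at hz
    obtain ⟨x, hx, hz⟩ := hz
    have := hsub x hx
    simp only [Metric.mem_ball] at hz ⊢
    calc dist z c ≤ dist z x + dist x c := dist_triangle z x c
      _ < r + R := by linarith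
      _ = R + r := by ring
  have key : (T.card : ℝ≥0∞) * (ENNReal.ofReal r ^ 2 * NNReal.pi)
      ≤ ENNReal.ofReal (R + r) ^ 2 * NNReal.pi := by
    calc (T.card : ℝ≥0∞) * (ENNReal.ofReal r ^ 2 * NNReal.pi)
        = ∑ x ∈ T, volume (Metric.ball x r) := by
          simp [Complex.volume_ball, Finset.sum_const, nsmul_eq_mul]
      _ = volume (⋃ x ∈ T, Metric.ball x r) := hmeas.symm
      _ ≤ volume (Metric.ball c (R + r)) := measure_mono hsub2
      _ = ENNReal.ofReal (R + r) ^ 2 * NNReal.pi := Complex.volume_ball c (R + r)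
  have hpi : (NNReal.pi : ℝ≥0∞) ≠ 0 :=
    ENNReal.coe_ne_zero.mpr (NNReal.coe_ne_zero.mp (by simpa using Real.pi_ne_zero))
  have hpi' : (NNReal.pi : ℝ≥0∞) ≠ ∞ := ENNReal.coe_ne_top
  rw [← mul_assoc, ENNReal.mul_le_mul_iff_left hpi hpi'] at key
  have key2 : ENNReal.ofReal ((T.card : ℝ) * r ^ 2) ≤ ENNReal.ofReal ((R + r) ^ 2) := by
    rw [ENNReal.ofReal_mul (by positivity), ENNReal.ofReal_pow hr.le,
      ENNReal.ofReal_natCast, ENNReal.ofReal_pow (by positivity : (0:ℝ) ≤ R + r)]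
    exact key
  have key3 : (T.card : ℝ) * r ^ 2 ≤ (R + r) ^ 2 :=
    (ENNReal.ofReal_le_ofReal_iff (by positivity)).mp key2
  rw [le_div_iff₀ (by positivity)]
  exact key3

/-- A `2r`-separated subset of a ball in `ℂ` is finite. -/
lemma finite_of_separated (r R : ℝ) (hr : 0 < r) (hR : 0 ≤ R) (c : ℂ) (S : Set ℂ)
    (hsub : ∀ x ∈ S, dist x c < R)
    (hsep : ∀ x ∈ S, ∀ y ∈ S, x ≠ y → 2 * r ≤ dist x y) : S.Finite := by
  by_contra hinf
  have hinf' : S.Infinite := hinf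
  obtain ⟨T, hTS, hcard⟩ := hinf'.exists_subset_card_eq (⌈(R + r) ^ 2 / r ^ 2⌉₊ + 1)
  have hb := packing_card_le r R hr hR c T (fun x hx => hsub x (hTS hx))
    (fun x hx y hy => hsep x (hTS hx) y (hTS hy))
  rw [hcard] at hb
  have h2 := Nat.le_ceil ((R + r) ^ 2 / r ^ 2)
  push_cast at hb
  linarith

/-- Summing the localized norm estimates for E_λ = E/(·−λ) over a β-separated
set Λ ∩ D (bounded overlap of the discs B(λ,ρ)) yields
∫ (Σ_{λ∈Λ∩D} 1/|z−λ|²)|E|²e^{−h} dm ≤ (C'/ρ²) ∫_{D'} |E|²e^{−h} dm. -/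
theorem stmt_19 : ∀ C > (0:ℝ), ∀ β : ℝ, 0 < β → β ≤ 1 → ∃ C' > (0:ℝ),
    ∀ (ρ : ℝ), 0 < ρ → ∀ (N : ℕ) (h : ℂ → ℝ), Continuous h →
    ∀ (E : ℂ → ℂ), Differentiable ℂ E → ∀ (Λ : Set ℂ) (w₀ : ℂ),
    (∀ z : ℂ, E z = 0 ↔ z ∈ Λ) → (∀ z ∈ Λ, deriv E z ≠ 0) →
    -- β-separation of Λ in the disc D' of radius (N+1)ρ
    (∀ lam ∈ Λ, ‖lam - w₀‖ < (N + 1) * ρ →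
      ∀ mu ∈ Λ, mu ≠ lam → β * ρ ≤ ‖lam - mu‖) →
    -- localized norm estimate for each λ ∈ Λ ∩ D
    (∀ lam ∈ Λ, ‖lam - w₀‖ < N * ρ →
      (∫⁻ z : ℂ, ENNReal.ofReal (‖E z‖ ^ 2 /
          ‖z - lam‖ ^ 2 * Real.exp (-h z)))
        ≤ ENNReal.ofReal (C / ρ ^ 2) *
          ∫⁻ z in Metric.ball lam ρ,
            ENNReal.ofReal (‖E z‖ ^ 2 * Real.exp (-h z))) →
    (∫⁻ z : ℂ,
        (∑' lam : {l : ℂ // l ∈ Λ ∧ ‖l - w₀‖ < N * ρ},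
          ENNReal.ofReal (1 / ‖z - (lam : ℂ)‖ ^ 2)) *
        ENNReal.ofReal (‖E z‖ ^ 2 * Real.exp (-h z)))
      ≤ ENNReal.ofReal (C' / ρ ^ 2) *
        ∫⁻ z in Metric.ball w₀ ((N + 1) * ρ),
          ENNReal.ofReal (‖E z‖ ^ 2 * Real.exp (-h z)) := by
  intro C hC β hβ hβ1
  refine ⟨C * (9 / β ^ 2), by positivity, ?_⟩
  intro ρ hρ N h hcont E hE Λ w₀ hzero hderiv hsep hloc
  set g : ℂ → ℝ≥0∞ := fun z => ENNReal.ofReal (‖E z‖ ^ 2 * Real.exp (-h z)) with hg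
  have hgmeas : Measurable g := by
    apply Continuous.measurable
    apply ENNReal.continuous_ofReal.comp
    exact ((continuous_norm.comp hE.continuous).pow 2).mul
      (Real.continuous_exp.comp hcont.neg)
  have hfmeas : ∀ lam : ℂ, Measurable fun z : ℂ =>
      ENNReal.ofReal (1 / ‖z - lam‖ ^ 2) := by
    intro lam
    apply Measurable.ennreal_ofReal
    exact measurable_const.div
      (((continuous_norm.comp (continuous_id.sub continuous_const)).pow 2).measurable)
  -- the index set is finite
  have hSsep : ∀ x ∈ {l : ℂ | l ∈ Λ ∧ ‖l - w₀‖ < N * ρ},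
      ∀ y ∈ {l : ℂ | l ∈ Λ ∧ ‖l - w₀‖ < N * ρ}, x ≠ y →
      2 * (β * ρ / 2) ≤ dist x y := by
    intro x hx y hy hxy
    have hx' : ‖x - w₀‖ < (N + 1) * ρ := lt_of_lt_of_le hx.2 (by nlinarith)
    have := hsep x hx.1 hx' y hy.1 (Ne.symm hxy)
    rw [Complex.dist_eq]
    linarith
  have hSfin : Set.Finite {l : ℂ | l ∈ Λ ∧ ‖l - w₀‖ < N * ρ} :=
    finite_of_separated (β * ρ / 2) (N * ρ) (by positivity) (by positivity) w₀ _
      (fun x hx => by rw [Complex.dist_eq]; exact hx.2) hSsep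
  haveI : Finite {l : ℂ // l ∈ Λ ∧ ‖l - w₀‖ < N * ρ} := hSfin.to_subtype
  haveI : Fintype {l : ℂ // l ∈ Λ ∧ ‖l - w₀‖ < N * ρ} := Fintype.ofFinite _
  classical
  -- pointwise bounded-overlap estimate
  have hpw : ∀ z : ℂ,
      (∑' lam : {l : ℂ // l ∈ Λ ∧ ‖l - w₀‖ < N * ρ},
        (Metric.ball (lam : ℂ) ρ).indicator g z)
      ≤ ENNReal.ofReal (9 / β ^ 2) * (Metric.ball w₀ ((N + 1) * ρ)).indicator g z := by
    intro z
    have hball : ∀ lam : {l : ℂ // l ∈ Λ ∧ ‖l - w₀‖ < N * ρ},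
        Metric.ball (lam : ℂ) ρ ⊆ Metric.ball w₀ ((N + 1) * ρ) := by
      intro lam
      apply Metric.ball_subset_ball'
      rw [Complex.dist_eq]
      have := lam.2.2
      nlinarith
    by_cases hz : z ∈ Metric.ball w₀ ((N + 1) * ρ)
    · rw [Set.indicator_of_mem hz]
      rw [tsum_fintype]
      simp_rw [Set.indicator_apply]
      rw [← Finset.sum_filter, Finset.sum_const]
      set F := Finset.univ.filter
        (fun lam : {l : ℂ // l ∈ Λ ∧ ‖l - w₀‖ < N * ρ} =>
          z ∈ Metric.ball (lam : ℂ) ρ) with hF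
      have hcard : (F.card : ℝ) ≤ 9 / β ^ 2 := by
        set T : Finset ℂ := F.image Subtype.val with hT
        have hTcard : T.card = F.card := Finset.card_image_of_injective F Subtype.val_injective
        have hpack := packing_card_le (β * ρ / 2) ρ (by positivity) hρ.le z T
          (by
            intro x hx
            rw [hT, Finset.mem_image] at hx
            obtain ⟨lam, hlam, rfl⟩ := hx
            rw [hF, Finset.mem_filter] at hlam
            rw [dist_comm]
            exact hlam.2)
          (by
            intro x hx y hy hxy
            rw [hT, Finset.mem_image] at hx hy
            obtain ⟨lx, hlx, rfl⟩ := hx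
            obtain ⟨ly, hly, rfl⟩ := hy
            exact hSsep _ lx.2 _ ly.2 hxy)
        rw [hTcard] at hpack
        refine hpack.trans ?_
        rw [div_le_div_iff₀ (by positivity) (by positivity)]
        nlinarith [mul_nonneg (mul_nonneg (sq_nonneg (β * ρ))
          (by linarith : (0:ℝ) ≤ 1 - β)) (by linarith : (0:ℝ) ≤ 5 + β)]
      calc F.card • g z = (F.card : ℝ≥0∞) * g z := nsmul_eq_mul _ _
        _ ≤ ENNReal.ofReal (9 / β ^ 2) * g z := by
            apply mul_le_mul_left
            rw [← ENNReal.ofReal_natCast]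
            exact ENNReal.ofReal_le_ofReal hcard
    · rw [Set.indicator_of_notMem hz, mul_zero]
      have : ∀ lam : {l : ℂ // l ∈ Λ ∧ ‖l - w₀‖ < N * ρ},
          (Metric.ball (lam : ℂ) ρ).indicator g z = 0 := by
        intro lam
        apply Set.indicator_of_notMem
        exact fun hmem => hz (hball lam hmem)
      simp [this]
  -- main chain
  calc ∫⁻ z : ℂ,
        (∑' lam : {l : ℂ // l ∈ Λ ∧ ‖l - w₀‖ < N * ρ},
          ENNReal.ofReal (1 / ‖z - (lam : ℂ)‖ ^ 2)) * g z
      = ∫⁻ z : ℂ, ∑' lam : {l : ℂ // l ∈ Λ ∧ ‖l - w₀‖ < N * ρ},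
          ENNReal.ofReal (1 / ‖z - (lam : ℂ)‖ ^ 2) * g z := by
        simp_rw [ENNReal.tsum_mul_right]
    _ = ∑' lam : {l : ℂ // l ∈ Λ ∧ ‖l - w₀‖ < N * ρ},
          ∫⁻ z : ℂ, ENNReal.ofReal (1 / ‖z - (lam : ℂ)‖ ^ 2) * g z :=
        lintegral_tsum (fun lam => ((hfmeas lam).mul hgmeas).aemeasurable)
    _ ≤ ∑' lam : {l : ℂ // l ∈ Λ ∧ ‖l - w₀‖ < N * ρ},
          ENNReal.ofReal (C / ρ ^ 2) * ∫⁻ z in Metric.ball (lam : ℂ) ρ, g z := by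
        apply ENNReal.tsum_le_tsum
        intro lam
        have heq : (fun z : ℂ => ENNReal.ofReal (1 / ‖z - (lam : ℂ)‖ ^ 2) * g z)
            = fun z : ℂ => ENNReal.ofReal (‖E z‖ ^ 2 /
                ‖z - (lam : ℂ)‖ ^ 2 * Real.exp (-h z)) := by
          funext z
          rw [hg]
          rw [← ENNReal.ofReal_mul (by positivity)]
          congr 1
          ring
        rw [heq]
        exact hloc lam lam.2.1 lam.2.2
    _ = ENNReal.ofReal (C / ρ ^ 2) *
          ∑' lam : {l : ℂ // l ∈ Λ ∧ ‖l - w₀‖ < N * ρ},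
            ∫⁻ z in Metric.ball (lam : ℂ) ρ, g z := ENNReal.tsum_mul_left
    _ = ENNReal.ofReal (C / ρ ^ 2) *
          ∫⁻ z : ℂ, ∑' lam : {l : ℂ // l ∈ Λ ∧ ‖l - w₀‖ < N * ρ},
            (Metric.ball (lam : ℂ) ρ).indicator g z := by
        congr 1
        rw [lintegral_tsum (fun lam => (hgmeas.indicator measurableSet_ball).aemeasurable)]
        congr 1
        funext lam
        rw [lintegral_indicator measurableSet_ball]
    _ ≤ ENNReal.ofReal (C / ρ ^ 2) *
          ∫⁻ z : ℂ, ENNReal.ofReal (9 / β ^ 2) *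
            (Metric.ball w₀ ((N + 1) * ρ)).indicator g z :=
        mul_le_mul_right (lintegral_mono hpw) _
    _ = ENNReal.ofReal (C * (9 / β ^ 2) / ρ ^ 2) *
          ∫⁻ z in Metric.ball w₀ ((N + 1) * ρ), g z := by
        rw [lintegral_const_mul _ (hgmeas.indicator measurableSet_ball),
          lintegral_indicator measurableSet_ball, ← mul_assoc,
          ← ENNReal.ofReal_mul (by positivity)]
        congr 2
        ring
end
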